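/- arXiv:2512.15928 — 3 statements merged into one kernel-verified Lean document; each statement's English description precedes it below -/
import Mathlib

section
/- Let γ be a full-rank density matrix and ρ a density matrix on a finite-dimensional Hilbert space. The minimum over all a ∈ [0,1] such that there exists a density matrix τ with ρ = (1-a)γ + a·τ equals 1 - μ_min(γ^{-1/2} ρ γ^{-1/2}). -/
open Matrix
open scoped ComplexOrder

variable {n : ℕ}

/-- Subtracting `c • 1` with `c` below all eigenvalues gives a PSD matrix. -/
lemma sub_smul_one_posSemidef {A : Matrix (Fin n) (Fin n) ℂ} (hA : A.IsHermitian)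
    {c : ℝ} (h : ∀ i, c ≤ hA.eigenvalues i) : (A - (c : ℂ) • 1).PosSemidef := by
  have hU : (hA.eigenvectorUnitary : Matrix (Fin n) (Fin n) ℂ) *
      star (hA.eigenvectorUnitary : Matrix (Fin n) (Fin n) ℂ) = 1 :=
    Unitary.mul_star_self_of_mem (hA.eigenvectorUnitary).2
  have key : A - (c : ℂ) • 1 =
      (hA.eigenvectorUnitary : Matrix (Fin n) (Fin n) ℂ) *
        diagonal (fun i => ((hA.eigenvalues i - c : ℝ) : ℂ)) *
        star (hA.eigenvectorUnitary : Matrix (Fin n) (Fin n) ℂ) := by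
    have hd : diagonal (fun i => ((hA.eigenvalues i - c : ℝ) : ℂ)) =
        diagonal (RCLike.ofReal ∘ hA.eigenvalues) - (c : ℂ) • 1 := by
      ext i j
      by_cases hij : i = j <;>
        simp [diagonal, hij, Matrix.one_apply, Matrix.smul_apply, Complex.ofReal_sub]
    rw [hd, mul_sub, sub_mul, mul_smul_comm, smul_mul_assoc, mul_one, hU]
    conv_lhs => rw [hA.spectral_theorem, Unitary.conjStarAlgAut_apply]
  rw [key]
  have hd : (diagonal (fun i => ((hA.eigenvalues i - c : ℝ) : ℂ))).PosSemidef := by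
    refine posSemidef_diagonal_iff.mpr fun i => ?_
    rw [Complex.zero_le_real]
    linarith [h i]
  simpa [Matrix.star_eq_conjTranspose] using
    hd.mul_mul_conjTranspose_same (hA.eigenvectorUnitary : Matrix (Fin n) (Fin n) ℂ)

lemma eigenvalues_ge_of_sub_posSemidef {A : Matrix (Fin n) (Fin n) ℂ} (hA : A.IsHermitian)
    {c : ℝ} (h : (A - (c : ℂ) • 1).PosSemidef) : ∀ i, c ≤ hA.eigenvalues i := by
  intro i
  have h0 := h.dotProduct_mulVec_nonneg ⇑(hA.eigenvectorBasis i)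
  have hnorm : star ⇑(hA.eigenvectorBasis i) ⬝ᵥ ⇑(hA.eigenvectorBasis i) = 1 := by
    have := hA.eigenvectorBasis.orthonormal.1 i
    have h2 : (inner ℂ (hA.eigenvectorBasis i) (hA.eigenvectorBasis i) : ℂ) = 1 := by
      rw [inner_self_eq_norm_sq_to_K, this]; norm_num
    rw [EuclideanSpace.inner_eq_star_dotProduct, dotProduct_comm] at h2
    simpa using h2
  rw [sub_mulVec, smul_mulVec, one_mulVec, hA.mulVec_eigenvectorBasis,
    dotProduct_sub, dotProduct_smul, dotProduct_smul, hnorm] at h0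
  have h1 : (0 : ℂ) ≤ ((hA.eigenvalues i - c : ℝ) : ℂ) := by
    push_cast
    simpa [RCLike.real_smul_eq_coe_mul] using h0
  linarith [Complex.zero_le_real.mp h1]

lemma posSemidef_smul_real {M : Matrix (Fin n) (Fin n) ℂ} (hM : M.PosSemidef)
    {c : ℝ} (hc : 0 ≤ c) : ((c : ℂ) • M).PosSemidef := by
  refine .of_dotProduct_mulVec_nonneg ?_ fun x => ?_
  · unfold Matrix.IsHermitian
    rw [conjTranspose_smul, hM.1.eq]
    congr 1
    simp [Complex.star_def]
  · rw [smul_mulVec, dotProduct_smul]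
    exact mul_nonneg (by exact_mod_cast Complex.zero_le_real.mpr hc) (hM.dotProduct_mulVec_nonneg x)

lemma trace_eq_sum_eigenvalues' {A : Matrix (Fin n) (Fin n) ℂ} (hA : A.IsHermitian) :
    A.trace = ∑ i, (hA.eigenvalues i : ℂ) := by
  conv_lhs => rw [hA.spectral_theorem]
  rw [Unitary.conjStarAlgAut_apply, trace_mul_cycle, Unitary.coe_star_mul_self, one_mul, trace_diagonal]
  rfl

lemma posSemidef_trace_nonneg {A : Matrix (Fin n) (Fin n) ℂ} (hA : A.PosSemidef) :
    0 ≤ A.trace := by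
  rw [trace_eq_sum_eigenvalues' hA.1]
  refine Finset.sum_nonneg fun i _ => ?_
  exact Complex.zero_le_real.mpr (hA.eigenvalues_nonneg i)

lemma posSemidef_trace_zero_eq_zero {A : Matrix (Fin n) (Fin n) ℂ} (hA : A.PosSemidef)
    (h : A.trace = 0) : A = 0 := by
  have hsum : ∑ i, hA.1.eigenvalues i = 0 := by
    have := trace_eq_sum_eigenvalues' hA.1
    rw [h] at this
    exact_mod_cast this.symm
  have hzero : ∀ i, hA.1.eigenvalues i = 0 := by
    intro i
    have := Finset.sum_eq_zero_iff_of_nonneg (fun j _ => hA.eigenvalues_nonneg j) |>.mp hsum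
    exact this i (Finset.mem_univ i)
  have hst := hA.1.spectral_theorem
  rw [hst]
  have : diagonal (RCLike.ofReal ∘ hA.1.eigenvalues : Fin n → ℂ) = 0 := by
    ext i j
    by_cases hij : i = j <;> simp [diagonal, hij, hzero]
  rw [this, map_zero]

/-- The minimum eigenvalue of a Hermitian matrix. -/
noncomputable def muMin {n : ℕ} [NeZero n] {A : Matrix (Fin n) (Fin n) ℂ}
    (hA : A.IsHermitian) : ℝ := ⨅ i, hA.eigenvalues i

/-- The inverse of the positive square root of a positive definite matrix. -/
noncomputable def sqrtInv {n : ℕ} {γ : Matrix (Fin n) (Fin n) ℂ}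
    (hγ : γ.PosDef) : Matrix (Fin n) (Fin n) ℂ := ((hγ.posSemidef.1.eigenvectorUnitary : Matrix (Fin n) (Fin n) ℂ) *
      diagonal ((↑) ∘ Real.sqrt ∘ hγ.posSemidef.1.eigenvalues) *
      (star hγ.posSemidef.1.eigenvectorUnitary : Matrix (Fin n) (Fin n) ℂ))⁻¹

/-- The weight of athermality: the minimum `a ∈ [0,1]` such that
`ρ = (1-a)γ + a τ` for some density matrix `τ` equals
`1 - μ_min(γ^{-1/2} ρ γ^{-1/2})`. -/
theorem stmt2 {n : ℕ} [NeZero n] (γ ρ : Matrix (Fin n) (Fin n) ℂ)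
    (hγ : γ.PosDef) (hγtr : γ.trace = 1)
    (hρ : ρ.PosSemidef) (hρtr : ρ.trace = 1)
    (hA : (sqrtInv hγ * ρ * sqrtInv hγ).IsHermitian) :
    IsLeast {a : ℝ | 0 ≤ a ∧ a ≤ 1 ∧
        ∃ τ : Matrix (Fin n) (Fin n) ℂ, τ.PosSemidef ∧ τ.trace = 1 ∧
          ρ = ((1 - a : ℝ) : ℂ) • γ + (a : ℂ) • τ}
      (1 - muMin hA) := by
  have hne : Nonempty (Fin n) := ⟨⟨0, Nat.pos_of_ne_zero (NeZero.ne n)⟩⟩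
  set Q := ((hγ.posSemidef.1.eigenvectorUnitary : Matrix (Fin n) (Fin n) ℂ) *
      diagonal ((↑) ∘ Real.sqrt ∘ hγ.posSemidef.1.eigenvalues) *
      (star hγ.posSemidef.1.eigenvectorUnitary : Matrix (Fin n) (Fin n) ℂ)) with hQdef
  have hQ : Q.PosSemidef := by
    have hd : (diagonal ((↑) ∘ Real.sqrt ∘ hγ.posSemidef.1.eigenvalues : Fin n → ℂ)).PosSemidef :=
      posSemidef_diagonal_iff.mpr fun i => by simp [Complex.zero_le_real, Real.sqrt_nonneg]
    have := hd.mul_mul_conjTranspose_same (hγ.posSemidef.1.eigenvectorUnitary : Matrix (Fin n) (Fin n) ℂ)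
    rw [hQdef, Matrix.star_eq_conjTranspose]
    exact this
  have hQQ : Q * Q = γ := by
    have hUU : star (hγ.posSemidef.1.eigenvectorUnitary : Matrix (Fin n) (Fin n) ℂ) *
        (hγ.posSemidef.1.eigenvectorUnitary : Matrix (Fin n) (Fin n) ℂ) = 1 :=
      Unitary.star_mul_self_of_mem (hγ.posSemidef.1.eigenvectorUnitary).2
    have hDD : diagonal ((↑) ∘ Real.sqrt ∘ hγ.posSemidef.1.eigenvalues : Fin n → ℂ) *
        diagonal ((↑) ∘ Real.sqrt ∘ hγ.posSemidef.1.eigenvalues : Fin n → ℂ) =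
        diagonal (RCLike.ofReal ∘ hγ.posSemidef.1.eigenvalues) := by
      rw [diagonal_mul_diagonal]
      congr 1
      funext i
      change ((Real.sqrt _ : ℝ) : ℂ) * ((Real.sqrt _ : ℝ) : ℂ) = ((hγ.posSemidef.1.eigenvalues i : ℝ) : ℂ)
      rw [← Complex.ofReal_mul, Real.mul_self_sqrt (hγ.posSemidef.eigenvalues_nonneg i)]
    rw [hQdef]
    conv_rhs => rw [hγ.posSemidef.1.spectral_theorem, Unitary.conjStarAlgAut_apply]
    rw [← hDD]
    simp only [mul_assoc]
    rw [← mul_assoc (star (hγ.posSemidef.1.eigenvectorUnitary : Matrix (Fin n) (Fin n) ℂ)), hUU, one_mul]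
  have hdet : IsUnit Q.det := by
    have hγdet : γ.det ≠ 0 := hγ.det_pos.ne'
    have hm : Q.det * Q.det = γ.det := by rw [← det_mul, hQQ]
    refine isUnit_iff_ne_zero.mpr fun h0 => hγdet ?_
    rw [← hm, h0, mul_zero]
  set S := sqrtInv hγ with hSdef
  have hSQ : S * Q = 1 := nonsing_inv_mul Q hdet
  have hQS : Q * S = 1 := mul_nonsing_inv Q hdet
  have hSh : Sᴴ = S := hQ.1.inv
  set B := S * ρ * S with hBdef
  have hQBQ : Q * B * Q = ρ := by
    calc Q * (S * ρ * S) * Q = (Q * S) * ρ * (S * Q) := by simp only [mul_assoc]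
    _ = ρ := by rw [hQS, hSQ, one_mul, mul_one]
  have hSγS : S * γ * S = 1 := by
    rw [← hQQ]
    calc S * (Q * Q) * S = (S * Q) * (Q * S) := by simp only [mul_assoc]
    _ = 1 := by rw [hSQ, hQS, one_mul]
  have hconj1 : ∀ c : ℝ, Q * (B - (c : ℂ) • 1) * Q = ρ - (c : ℂ) • γ := by
    intro c
    rw [mul_sub, sub_mul, hQBQ, mul_smul_comm, smul_mul_assoc, mul_one, hQQ]
  have hconj2 : ∀ c : ℝ, S * (ρ - (c : ℂ) • γ) * S = B - (c : ℂ) • 1 := by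
    intro c
    rw [mul_sub, sub_mul, mul_smul_comm, smul_mul_assoc, hSγS]
  set μ := muMin hA with hμdef
  have hμle : ∀ i, μ ≤ hA.eigenvalues i := fun i =>
    ciInf_le (Finite.bddBelow_range _) i
  have hBpsd : B.PosSemidef := by
    have := hρ.conjTranspose_mul_mul_same S
    rwa [hSh] at this
  have hμ0 : 0 ≤ μ := le_ciInf fun i => hBpsd.eigenvalues_nonneg i
  have hMpsd : (ρ - (μ : ℂ) • γ).PosSemidef := by
    have h1 := (sub_smul_one_posSemidef hA hμle).mul_mul_conjTranspose_same Q
    rw [hQ.1.eq] at h1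
    rwa [hconj1 μ] at h1
  have htr : (ρ - (μ : ℂ) • γ).trace = ((1 - μ : ℝ) : ℂ) := by
    rw [trace_sub, trace_smul, hρtr, hγtr, smul_eq_mul, mul_one]
    push_cast
    ring
  have hμ1 : μ ≤ 1 := by
    have h0 := posSemidef_trace_nonneg hMpsd
    rw [htr] at h0
    linarith [Complex.zero_le_real.mp h0]
  constructor
  · refine ⟨by linarith, by linarith, ?_⟩
    by_cases h0 : μ = 1
    · refine ⟨γ, hγ.posSemidef, hγtr, ?_⟩
      have hz : (ρ - (μ : ℂ) • γ) = 0 := by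
        apply posSemidef_trace_zero_eq_zero hMpsd
        rw [htr, h0]; norm_num
      have hργ : ρ = γ := by
        have := sub_eq_zero.mp hz
        rw [this, h0]; norm_num
      rw [hργ, h0]
      norm_num
    · have ha : (0 : ℝ) < 1 - μ := lt_of_le_of_ne (by linarith) (by intro h; exact h0 (by linarith))
      refine ⟨(((1 - μ)⁻¹ : ℝ) : ℂ) • (ρ - (μ : ℂ) • γ),
        posSemidef_smul_real hMpsd (inv_nonneg.mpr ha.le), ?_, ?_⟩
      · rw [trace_smul, htr, smul_eq_mul]
        exact_mod_cast inv_mul_cancel₀ ha.ne'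
      · have hcoef : ((1 - (1 - μ) : ℝ) : ℂ) = (μ : ℂ) := by push_cast; ring
        rw [hcoef, smul_smul]
        have hmul : ((1 - μ : ℝ) : ℂ) * (((1 - μ)⁻¹ : ℝ) : ℂ) = 1 := by
          exact_mod_cast mul_inv_cancel₀ ha.ne'
        rw [hmul, one_smul]
        abel
  · rintro a ⟨ha0, ha1, τ, hτpsd, hτtr, heq⟩
    have hps : (ρ - ((1 - a : ℝ) : ℂ) • γ).PosSemidef := by
      have : ρ - ((1 - a : ℝ) : ℂ) • γ = ((a : ℝ) : ℂ) • τ := by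
        rw [heq]; abel
      rw [this]
      exact posSemidef_smul_real hτpsd ha0
    have hBps : (B - ((1 - a : ℝ) : ℂ) • 1).PosSemidef := by
      rw [← hconj2 (1 - a)]
      have h1 := hps.conjTranspose_mul_mul_same S
      rwa [hSh] at h1
    have h2 : 1 - a ≤ μ := le_ciInf (eigenvalues_ge_of_sub_posSemidef hA hBps)
    linarith
end

section
/- Let ρ be a density matrix on a finite-dimensional Hilbert space, {Π_l} the projectors of a fixed orthonormal basis, Φ a quantum channel (CPTP map), and {P_k} another projective measurement. Define the product distribution p_coh(l,k)(σ) = Tr(σ Π_l)·Tr(Φ(σ) P_k) for any state σ. Then D_KL(p_coh(ρ) ‖ p_coh(Δ[ρ])) ≤ 2·D(ρ ‖ Δ[ρ]), where Δ is dephasing in the basis {Π_l}. -/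
open Matrix
open scoped ComplexOrder

/-- Classical Kullback–Leibler divergence of finitely supported distributions. -/
noncomputable def KLdiv {I : Type*} [Fintype I] (p q : I → ℝ) : ℝ :=
  ∑ i, p i * Real.log (p i / q i)

/-- The logarithm of a Hermitian matrix, via the spectral theorem. -/
noncomputable def hermLog {n : ℕ} {A : Matrix (Fin n) (Fin n) ℂ}
    (hA : A.IsHermitian) : Matrix (Fin n) (Fin n) ℂ :=
  (hA.eigenvectorUnitary : Matrix (Fin n) (Fin n) ℂ) *
    Matrix.diagonal (fun i => (Real.log (hA.eigenvalues i) : ℂ)) *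
    star (hA.eigenvectorUnitary : Matrix (Fin n) (Fin n) ℂ)

/-- EPM joint distribution: `p_coh(σ)(l,k) = Tr(σ Π_l) · Tr(Φ(σ) P_k)`, where
`Π_l` are the projectors of the standard (reference) basis and `Φ` is the CPTP
map with Kraus operators `A α`. -/
noncomputable def pcoh {n mK K : ℕ} (A : Fin mK → Matrix (Fin n) (Fin n) ℂ)
    (P : Fin K → Matrix (Fin n) (Fin n) ℂ)
    (σ : Matrix (Fin n) (Fin n) ℂ) : Fin n × Fin K → ℝ :=
  fun x => ((σ * Matrix.single x.1 x.1 1).trace).re *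
    (((∑ α, A α * σ * (A α)ᴴ) * P x.2).trace).re

namespace Stmt9Aux
open Filter Set



/-- derivative of a single term -/
lemma term_hasDeriv {a b : ℝ} (ha : 0 ≤ a) (hb : 0 ≤ b) (hab : a = 0 ∨ 0 < b)
    {t : ℝ} (ht : 0 < t) :
    HasDerivAt (fun t => a * (Real.log (1+t) - Real.log (a + t*b)))
      (a/(1+t) - a*b/(a+t*b)) t := by
  rcases hab with h0 | hbpos
  · subst h0
    simp only [zero_mul, zero_div, sub_zero, zero_add]
    norm_num
    exact hasDerivAt_const _ _
  · have h1 : (0:ℝ) < 1 + t := by linarith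
    have h2 : 0 < a + t*b := by nlinarith
    have d1 : HasDerivAt (fun t:ℝ => 1 + t) 1 t := by
      simpa using (hasDerivAt_id t).const_add 1
    have d2 : HasDerivAt (fun t:ℝ => a + t*b) b t := by
      simpa using ((hasDerivAt_id t).mul_const b).const_add a
    have l1 := d1.log h1.ne'
    have l2 := d2.log h2.ne'
    have := (l1.sub l2).const_mul a
    exact this.congr_deriv (by ring)

lemma term_continuousOn {a b : ℝ} (ha : 0 ≤ a) (hb : 0 ≤ b) (hab : a = 0 ∨ 0 < a) :
    ContinuousOn (fun t => a * (Real.log (1+t) - Real.log (a + t*b))) (Ici (0:ℝ)) := by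
  rcases hab with h0 | hapos
  · subst h0; simp only [zero_mul]; exact continuousOn_const
  · apply ContinuousOn.mul continuousOn_const
    apply ContinuousOn.sub
    · apply ContinuousOn.log (Continuous.continuousOn (by continuity))
      intro x hx
      have : (0:ℝ) ≤ x := hx
      positivity
    · apply ContinuousOn.log (Continuous.continuousOn (by continuity))
      intro x hx
      have hx0 : (0:ℝ) ≤ x := hx
      have : 0 < a + x*b := by nlinarith
      exact this.ne'

lemma term_tendsto {a b : ℝ} (ha : 0 ≤ a) (hb : 0 ≤ b) (hab : a = 0 ∨ 0 < b) :
    Tendsto (fun t => a * (Real.log (1+t) - Real.log (a + t*b))) atTop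
      (nhds (-(a * Real.log b))) := by
  rcases hab with h0 | hbpos
  · subst h0; simp only [zero_mul]
    simpa using tendsto_const_nhds
  · have hq : Tendsto (fun t : ℝ => (a + t*b)/(1+t)) atTop (nhds b) := by
      have h1 : Tendsto (fun t : ℝ => (a/t + b)/(1/t + 1)) atTop (nhds b) := by
        have hnum : Tendsto (fun t : ℝ => a/t + b) atTop (nhds b) := by
          simpa using (tendsto_const_nhds.div_atTop tendsto_id).add (tendsto_const_nhds (x := b))
        have hden : Tendsto (fun t : ℝ => 1/t + 1) atTop (nhds 1) := by
          have := ((tendsto_const_nhds (x := (1:ℝ))).div_atTop tendsto_id).add (tendsto_const_nhds (x := (1:ℝ)))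
          simpa using this
        simpa [Pi.div_def] using hnum.div hden one_ne_zero
      apply h1.congr'
      filter_upwards [eventually_gt_atTop (0:ℝ)] with t ht
      field_simp
    have hlog : Tendsto (fun t : ℝ => Real.log ((a + t*b)/(1+t))) atTop (nhds (Real.log b)) :=
      ((Real.continuousAt_log hbpos.ne').tendsto).comp hq
    have : Tendsto (fun t : ℝ => -(a * Real.log ((a + t*b)/(1+t)))) atTop
        (nhds (-(a * Real.log b))) := (hlog.const_mul a).neg
    apply this.congr'
    filter_upwards [eventually_gt_atTop (0:ℝ)] with t ht
    have h1 : (0:ℝ) < 1 + t := by linarith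
    have h2 : 0 < a + t*b := by nlinarith
    rw [Real.log_div h2.ne' h1.ne']
    ring


section

variable {I K : Type*} [Fintype I] [Fintype K]

lemma KLmono (c a b : I → ℝ) (q q' : K → ℝ)
    (hc : ∀ i, 0 ≤ c i) (ha : ∀ i, 0 ≤ a i) (hb : ∀ i, 0 < b i)
    (hq : ∀ k, 0 ≤ q k) (hq' : ∀ k, 0 ≤ q' k) (hqq' : ∀ k, q' k = 0 → q k = 0)
    (hca : ∑ i, c i * a i = 1) (hcb : ∑ i, c i * b i = 1)
    (hqs : ∑ k, q k = 1) (hq's : ∑ k, q' k = 1)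
    (master : ∀ t, 0 < t →
      ∑ k, (q' k)^2/(q k + t * q' k) ≤ ∑ i, c i * ((b i)^2/(a i + t * b i))) :
    ∑ k, q k * (Real.log (q k) - Real.log (q' k))
      ≤ ∑ i, c i * (a i * Real.log (a i) - a i * Real.log (b i)) := by
  classical
  set f : ℝ → ℝ := fun t =>
      (∑ i, c i * (a i * (Real.log (1+t) - Real.log (a i + t * b i))))
      - ∑ k, q k * (Real.log (1+t) - Real.log (q k + t * q' k)) with hf
  have hqalt : ∀ k, q k = 0 ∨ 0 < q' k := by
    intro k
    rcases eq_or_lt_of_le (hq' k) with h | h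
    · exact Or.inl (hqq' k h.symm)
    · exact Or.inr h
  have hderiv : ∀ t, 0 < t → HasDerivAt f
      ((∑ i, c i * (a i/(1+t) - a i * b i/(a i + t * b i)))
        - ∑ k, (q k/(1+t) - q k * q' k/(q k + t * q' k))) t := by
    intro t ht
    apply HasDerivAt.sub
    · apply HasDerivAt.fun_sum
      intro i _
      exact (term_hasDeriv (ha i) (hb i).le (Or.inr (hb i)) ht).const_mul (c i)
    · apply HasDerivAt.fun_sum
      intro k _
      exact term_hasDeriv (hq k) (hq' k) (hqalt k) ht
  have hderiv_nonneg : ∀ t, 0 < t →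
      0 ≤ ((∑ i, c i * (a i/(1+t) - a i * b i/(a i + t * b i)))
        - ∑ k, (q k/(1+t) - q k * q' k/(q k + t * q' k))) := by
    intro t ht
    have h1t : (0:ℝ) < 1 + t := by linarith
    have e1 : ∀ i, c i * (a i/(1+t) - a i * b i/(a i + t * b i))
        = c i * a i/(1+t) - (c i * b i - t * (c i * ((b i)^2/(a i + t*b i)))) := by
      intro i
      have hd : 0 < a i + t * b i := by nlinarith [ha i, hb i]
      field_simp [hd.ne', h1t.ne']
      ring
    have e2 : ∀ k, (q k/(1+t) - q k * q' k/(q k + t * q' k))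
        = q k/(1+t) - (q' k - t * ((q' k)^2/(q k + t*q' k))) := by
      intro k
      rcases hqalt k with h0 | hpos
      · rcases eq_or_lt_of_le (hq' k) with h0' | hpos'
        · rw [h0, ← h0']; norm_num
        · have hd : 0 < q k + t * q' k := by nlinarith
          rw [h0]; field_simp [h1t.ne']; ring
      · have hd : 0 < q k + t * q' k := by nlinarith [hq k]
        field_simp [hd.ne', h1t.ne']
        ring
    rw [Finset.sum_congr rfl (fun i _ => e1 i), Finset.sum_congr rfl (fun k _ => e2 k)]
    simp only [Finset.sum_sub_distrib, ← Finset.sum_div, ← Finset.mul_sum, hca, hqs, hcb, hq's]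
    have := master t ht
    have h2 : t * (∑ k, (q' k)^2/(q k + t * q' k))
        ≤ t * ∑ i, c i * ((b i)^2/(a i + t * b i)) :=
      mul_le_mul_of_nonneg_left this ht.le
    linarith
  have hmono : MonotoneOn f (Ici (0:ℝ)) := by
    apply monotoneOn_of_deriv_nonneg (convex_Ici 0)
    · apply ContinuousOn.sub
      · apply continuousOn_finset_sum
        intro i _
        exact continuousOn_const.mul
          (term_continuousOn (ha i) (hb i).le ((ha i).eq_or_lt.imp Eq.symm id))
      · apply continuousOn_finset_sum
        intro k _
        exact term_continuousOn (hq k) (hq' k) ((hq k).eq_or_lt.imp Eq.symm id)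
    · intro x hx
      rw [interior_Ici] at hx
      exact (hderiv x hx).differentiableAt.differentiableWithinAt
    · intro x hx
      rw [interior_Ici] at hx
      rw [(hderiv x hx).deriv]
      exact hderiv_nonneg x hx
  have hlim : Tendsto f atTop
      (nhds ((∑ i, c i * (-(a i * Real.log (b i)))) - ∑ k, (-(q k * Real.log (q' k))))) := by
    apply Tendsto.sub
    · apply tendsto_finset_sum
      intro i _
      exact (term_tendsto (ha i) (hb i).le (Or.inr (hb i))).const_mul (c i)
    · apply tendsto_finset_sum
      intro k _
      exact term_tendsto (hq k) (hq' k) (hqalt k)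
  have hge : f 0 ≤ (∑ i, c i * (-(a i * Real.log (b i)))) - ∑ k, (-(q k * Real.log (q' k))) := by
    apply ge_of_tendsto hlim
    filter_upwards [eventually_ge_atTop (0:ℝ)] with x hx
    exact hmono (Set.mem_Ici.mpr (le_refl 0)) (Set.mem_Ici.mpr hx) hx
  have hf0 : f 0 = (∑ i, c i * (-(a i * Real.log (a i)))) - ∑ k, (-(q k * Real.log (q k))) := by
    simp [hf, Real.log_one]
  rw [hf0] at hge
  have expand : ∀ (u v : ℝ) (w : ℝ), w * (u - v) = w * u - w * v := fun u v w => mul_sub w u v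
  simp only [mul_sub, Finset.sum_sub_distrib] at hge ⊢
  simp only [mul_neg, Finset.sum_neg_distrib] at hge
  linarith
end



variable {n K : ℕ}

lemma psd_eq_ct_mul_self {A : Matrix (Fin n) (Fin n) ℂ} (hA : A.PosSemidef) :
    ∃ B : Matrix (Fin n) (Fin n) ℂ, A = Bᴴ * B := by
  open scoped MatrixOrder in exact CStarAlgebra.nonneg_iff_eq_star_mul_self.mp hA.nonneg


/-- trace of `Cᴴ * C` has nonnegative real part -/
lemma trace_conjTranspose_mul_self_re_nonneg (C : Matrix (Fin n) (Fin n) ℂ) :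
    0 ≤ ((Cᴴ * C).trace).re := by
  have : (Cᴴ * C).trace = ∑ j, ∑ a, (starRingEnd ℂ) (C a j) * C a j := by
    simp [Matrix.trace, Matrix.mul_apply, Matrix.conjTranspose_apply, Matrix.diag]
  rw [this]
  rw [Complex.re_sum]
  apply Finset.sum_nonneg
  intro j _
  rw [Complex.re_sum]
  apply Finset.sum_nonneg
  intro a _
  rw [mul_comm, Complex.mul_conj]
  exact Complex.normSq_nonneg _

lemma psd_trace_re_nonneg {A : Matrix (Fin n) (Fin n) ℂ} (hA : A.PosSemidef) :
    0 ≤ (A.trace).re := by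
  obtain ⟨B, rfl⟩ := psd_eq_ct_mul_self hA
  exact trace_conjTranspose_mul_self_re_nonneg B

/-- trace of a product of two psd matrices has nonnegative real part -/
lemma psd_pair_trace_re_nonneg {A B : Matrix (Fin n) (Fin n) ℂ}
    (hA : A.PosSemidef) (hB : B.PosSemidef) : 0 ≤ ((A * B).trace).re := by
  obtain ⟨C, rfl⟩ := psd_eq_ct_mul_self hB
  have h1 : A * (Cᴴ * C) = A * Cᴴ * C := by rw [mul_assoc]
  rw [h1, Matrix.trace_mul_cycle]
  have h2 : C * A * Cᴴ = (Cᴴ)ᴴ * A * Cᴴ := by rw [conjTranspose_conjTranspose]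
  rw [h2]
  exact psd_trace_re_nonneg (hA.conjTranspose_mul_mul_same Cᴴ)

/-- The operator Cauchy-Schwarz inequality for a resolution of identity. -/
lemma schwarz_psd (F : Fin K → Matrix (Fin n) (Fin n) ℂ)
    (hF : ∀ k, (F k).PosSemidef) (hFsum : ∑ k, F k = 1) (w : Fin K → ℝ) :
    ((∑ k, ((w k : ℂ)^2) • F k) -
      (∑ k, (w k : ℂ) • F k) * (∑ k, (w k : ℂ) • F k)).PosSemidef := by
  set Z := ∑ k, (w k : ℂ) • F k with hZ
  have key : (∑ k, ((w k : ℂ)^2) • F k) - Z * Z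
      = ∑ k, ((w k : ℂ) • 1 - Z)ᴴ * F k * ((w k : ℂ) • 1 - Z) := by
    have expand : ∀ k, ((w k : ℂ) • 1 - Z)ᴴ * F k * ((w k : ℂ) • 1 - Z)
        = ((w k : ℂ)^2) • F k - (w k : ℂ) • (F k * Z) - ((w k : ℂ) • (Z * F k) - Z * F k * Z) := by
      intro k
      have hZh : Zᴴ = Z := by
        rw [hZ, Matrix.conjTranspose_sum]
        · apply Finset.sum_congr rfl
          intro k _
          rw [Matrix.conjTranspose_smul, (hF k).1.eq]
          congr 1
          simp [Complex.conj_ofReal]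
      have h1 : ((w k : ℂ) • 1 - Z)ᴴ = (w k : ℂ) • 1 - Z := by
        rw [Matrix.conjTranspose_sub, Matrix.conjTranspose_smul, hZh, Matrix.conjTranspose_one]
        congr 1
        simp [Complex.conj_ofReal]
      rw [h1]
      simp only [sub_mul, mul_sub, smul_mul_assoc, mul_smul_comm, one_mul, mul_one,
        smul_smul, smul_sub, smul_add, neg_smul, one_smul, ← sq]
      module
    rw [Finset.sum_congr rfl (fun k _ => expand k)]
    simp only [Finset.sum_sub_distrib]
    have e1 : ∑ k, (w k : ℂ) • (F k * Z) = Z * Z := by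
      have h : ∑ k, (w k : ℂ) • (F k * Z) = ∑ k, ((w k : ℂ) • F k) * Z :=
        Finset.sum_congr rfl (fun k _ => (smul_mul_assoc _ _ _).symm)
      rw [h, ← Finset.sum_mul]
    have e2 : ∑ k, (w k : ℂ) • (Z * F k) = Z * Z := by
      have h : ∑ k, (w k : ℂ) • (Z * F k) = ∑ k, Z * ((w k : ℂ) • F k) :=
        Finset.sum_congr rfl (fun k _ => (mul_smul_comm _ _ _).symm)
      rw [h, ← Finset.mul_sum]
    have e3 : ∑ k, Z * F k * Z = Z * Z := by
      rw [← Finset.sum_mul, ← Finset.mul_sum, hFsum, mul_one]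
    rw [e1, e2, e3]
    abel
  rw [key]
  refine Finset.sum_induction _ _ (fun x y hx hy => hx.add hy) Matrix.PosSemidef.zero ?_
  intro k _
  exact (hF k).conjTranspose_mul_mul_same _

lemma re_trace_sum_smul (M : Matrix (Fin n) (Fin n) ℂ)
    (F : Fin K → Matrix (Fin n) (Fin n) ℂ) (v : Fin K → ℝ) :
    (((∑ k, ((v k : ℝ) : ℂ) • F k) * M).trace).re = ∑ k, v k * ((F k * M).trace).re := by
  rw [Finset.sum_mul]
  have h : ∀ k, (((v k : ℝ) : ℂ) • F k) * M = ((v k : ℝ) : ℂ) • (F k * M) :=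
    fun k => smul_mul_assoc _ _ _
  rw [Finset.sum_congr rfl (fun k _ => h k), Matrix.trace_sum, Complex.re_sum]
  apply Finset.sum_congr rfl
  intro k _
  rw [Matrix.trace_smul, smul_eq_mul, Complex.re_ofReal_mul]

/-- The master inequality. -/
lemma master (ρ : Matrix (Fin n) (Fin n) ℂ) (hρ : ρ.PosSemidef)
    (s : Fin n → ℝ) (hs : ∀ j, 0 < s j)
    (u : Matrix (Fin n) (Fin n) ℂ) (r : Fin n → ℝ) (hr : ∀ i, 0 ≤ r i)
    (hu2 : u * uᴴ = 1)
    (hspec : ρ * u = u * Matrix.diagonal (fun i => (r i : ℂ)))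
    (F : Fin K → Matrix (Fin n) (Fin n) ℂ) (hF : ∀ k, (F k).PosSemidef)
    (hFsum : ∑ k, F k = 1)
    (t : ℝ) (ht : 0 < t) :
    ∑ k, (((Matrix.diagonal (fun j => (s j : ℂ)) * F k).trace).re)^2 /
        (((ρ * F k).trace).re + t * ((Matrix.diagonal (fun j => (s j : ℂ)) * F k).trace).re)
      ≤ ∑ i, ∑ j, Complex.normSq (u j i) * ((s j)^2/(r i + t * s j)) := by
  classical
  set σd : Matrix (Fin n) (Fin n) ℂ := Matrix.diagonal (fun j => (s j : ℂ)) with hσd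
  have hσh : σd.IsHermitian := by
    rw [hσd]
    have : star (fun j => ((s j : ℝ) : ℂ)) = fun j => ((s j : ℝ) : ℂ) := by
      funext j
      simp [Complex.conj_ofReal]
    exact Matrix.isHermitian_diagonal_of_self_adjoint _ this
  have hσpsd : σd.PosSemidef := by
    rw [hσd]
    exact Matrix.PosSemidef.diagonal (fun j => Complex.zero_le_real.mpr (hs j).le)
  set q : Fin K → ℝ := fun k => ((ρ * F k).trace).re with hqdef
  set q' : Fin K → ℝ := fun k => ((σd * F k).trace).re with hq'def
  have hq : ∀ k, 0 ≤ q k := fun k => psd_pair_trace_re_nonneg hρ (hF k)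
  have hq' : ∀ k, 0 ≤ q' k := fun k => psd_pair_trace_re_nonneg hσpsd (hF k)
  set w : Fin K → ℝ := fun k => q' k / (q k + t * q' k) with hwdef
  set Z : Matrix (Fin n) (Fin n) ℂ := ∑ k, ((w k : ℝ) : ℂ) • F k with hZ
  have hZh : Zᴴ = Z := by
    rw [hZ, Matrix.conjTranspose_sum]
    apply Finset.sum_congr rfl
    intro k _
    rw [Matrix.conjTranspose_smul, (hF k).1.eq]
    congr 1
    exact Complex.conj_ofReal _
  set c : Fin n → Fin n → ℝ := fun i j => s j / (r i + t * s j) with hcdef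
  have hden : ∀ i j, 0 < r i + t * s j := fun i j => by nlinarith [hr i, hs j]
  set N : Matrix (Fin n) (Fin n) ℂ := Matrix.of (fun i j => (uᴴ) i j * ((c i j : ℝ) : ℂ)) with hN
  set Y : Matrix (Fin n) (Fin n) ℂ := u * N with hY
  -- the key identity: ρ Y + t • (Y σd) = σd
  have hKey : ρ * Y + (t : ℂ) • (Y * σd) = σd := by
    have h1 : ρ * Y = u * (Matrix.diagonal (fun i => (r i : ℂ)) * N) := by
      rw [hY, ← mul_assoc, hspec, mul_assoc]
    have h2 : (t:ℂ) • (Y * σd) = u * ((t:ℂ) • (N * σd)) := by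
      rw [hY, mul_assoc, mul_smul_comm]
    rw [h1, h2, ← Matrix.mul_add]
    have h3 : Matrix.diagonal (fun i => (r i : ℂ)) * N + (t:ℂ) • (N * σd) = uᴴ * σd := by
      ext i j
      have hre : (r i) * (c i j) + t * (c i j * s j) = s j := by
        have h := (hden i j).ne'
        show r i * (s j / (r i + t * s j)) + t * (s j / (r i + t * s j) * s j) = s j
        rw [show r i * (s j / (r i + t * s j)) + t * (s j / (r i + t * s j) * s j)
          = s j * (r i + t * s j) / (r i + t * s j) by ring, mul_div_cancel_right₀ _ h]
      have hreC := congrArg (Complex.ofReal) hre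
      push_cast at hreC
      simp only [Matrix.add_apply, Matrix.smul_apply, Matrix.diagonal_mul, hσd,
        Matrix.mul_diagonal, hN, Matrix.of_apply, smul_eq_mul]
      linear_combination ((uᴴ) i j) * hreC
    rw [h3, ← mul_assoc, hu2, one_mul]
  -- grouping identities
  have group : ∀ W : Matrix (Fin n) (Fin n) ℂ,
      (Wᴴ * ρ * Y).trace + (t:ℂ) * (Wᴴ * Y * σd).trace = (Wᴴ * σd).trace := by
    intro W
    have h1 : Wᴴ * ρ * Y = Wᴴ * (ρ * Y) := by rw [mul_assoc]
    have h2 : (t:ℂ) * (Wᴴ * Y * σd).trace = (Wᴴ * ((t:ℂ) • (Y * σd))).trace := by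
      rw [mul_smul_comm, Matrix.trace_smul, smul_eq_mul, mul_assoc]
    rw [h1, h2, ← Matrix.trace_add, ← Matrix.mul_add, hKey]
  have hstar : star ((t:ℂ)) = (t:ℂ) := Complex.conj_ofReal _
  have group2 : (Yᴴ * ρ * Z).trace + (t:ℂ) * (Yᴴ * Z * σd).trace = (σd * Z).trace := by
    have h1 : Yᴴ * ρ * Z = (ρ * Y)ᴴ * Z := by
      rw [Matrix.conjTranspose_mul ρ Y, hρ.1.eq]
    have h2 : (t:ℂ) * (Yᴴ * Z * σd).trace = (((t:ℂ) • (Y * σd))ᴴ * Z).trace := by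
      rw [Matrix.conjTranspose_smul, hstar, Matrix.conjTranspose_mul Y σd, hσh.eq,
        smul_mul_assoc, Matrix.trace_smul, smul_eq_mul, Matrix.trace_mul_cycle Yᴴ Z σd,
        mul_assoc]
    rw [h1, h2, ← Matrix.trace_add, ← Matrix.add_mul, ← Matrix.conjTranspose_add, hKey, hσh.eq]
  -- expansion
  have expand1 : (Z - Y)ᴴ * ρ * (Z - Y)
      = Zᴴ*ρ*Z - Zᴴ*ρ*Y - (Yᴴ*ρ*Z - Yᴴ*ρ*Y) := by
    rw [Matrix.conjTranspose_sub]
    simp only [Matrix.sub_mul, Matrix.mul_sub]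
    abel
  have expand2 : (Z - Y)ᴴ * (Z - Y) * σd
      = Zᴴ*Z*σd - Zᴴ*Y*σd - (Yᴴ*Z*σd - Yᴴ*Y*σd) := by
    rw [Matrix.conjTranspose_sub]
    simp only [Matrix.sub_mul, Matrix.mul_sub]
    abel
  have npos1 : 0 ≤ (((Z-Y)ᴴ * ρ * (Z-Y)).trace).re :=
    psd_trace_re_nonneg (hρ.conjTranspose_mul_mul_same _)
  have npos2 : 0 ≤ (((Z-Y)ᴴ * (Z-Y) * σd).trace).re := by
    have h : ((Z-Y)ᴴ * (Z-Y) * σd).trace = ((Z-Y) * σd * (Z-Y)ᴴ).trace := by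
      rw [mul_assoc, Matrix.trace_mul_comm, mul_assoc]
    rw [h]
    have h2 := hσpsd.conjTranspose_mul_mul_same (Z-Y)ᴴ
    rw [Matrix.conjTranspose_conjTranspose] at h2
    exact psd_trace_re_nonneg h2
  -- main inequality at the level of traces
  have hsum : ((Z-Y)ᴴ*ρ*(Z-Y)).trace + (t:ℂ) * (((Z-Y)ᴴ*(Z-Y)*σd).trace)
      = ((Zᴴ*ρ*Z).trace + (t:ℂ)*((Zᴴ*Z*σd).trace))
        - (Zᴴ*σd).trace - (σd*Z).trace + (Yᴴ*σd).trace := by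
    rw [expand1, expand2]
    simp only [Matrix.trace_sub]
    have g1 := group Z
    have g2 := group2
    have g3 := group Y
    linear_combination -g1 - g2 + g3
  have main : 0 ≤ (((Zᴴ*ρ*Z).trace).re + t * ((Zᴴ*Z*σd).trace).re)
      - ((Zᴴ*σd).trace).re - ((σd*Z).trace).re + ((Yᴴ*σd).trace).re := by
    have hre := congrArg Complex.re hsum
    simp only [Complex.add_re, Complex.sub_re, Complex.re_ofReal_mul] at hre
    nlinarith [npos1, npos2, mul_nonneg ht.le npos2]
  -- Schwarz bounds
  have hconv : (∑ k, ((w k : ℂ)^2) • F k) = ∑ k, ((((w k)^2 : ℝ)) : ℂ) • F k := by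
    apply Finset.sum_congr rfl
    intro k _
    congr 1
    push_cast
    ring
  have bound1 : ((Z*Z*ρ).trace).re ≤ ∑ k, (w k)^2 * q k := by
    have h0 := psd_pair_trace_re_nonneg (schwarz_psd F hF hFsum w) hρ
    rw [Matrix.sub_mul, Matrix.trace_sub, Complex.sub_re, hconv, ← hZ] at h0
    rw [re_trace_sum_smul] at h0
    have he : ∀ k, ((F k * ρ).trace).re = q k := by
      intro k
      rw [Matrix.trace_mul_comm]
    rw [Finset.sum_congr rfl (fun k _ => by rw [he k])] at h0
    linarith
  have bound2 : ((Z*Z*σd).trace).re ≤ ∑ k, (w k)^2 * q' k := by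
    have h0 := psd_pair_trace_re_nonneg (schwarz_psd F hF hFsum w) hσpsd
    rw [Matrix.sub_mul, Matrix.trace_sub, Complex.sub_re, hconv, ← hZ] at h0
    rw [re_trace_sum_smul] at h0
    have he : ∀ k, ((F k * σd).trace).re = q' k := by
      intro k
      rw [Matrix.trace_mul_comm]
    rw [Finset.sum_congr rfl (fun k _ => by rw [he k])] at h0
    linarith
  have lin1 : ((Zᴴ*σd).trace).re = ∑ k, w k * q' k := by
    rw [hZh, hZ, re_trace_sum_smul]
    apply Finset.sum_congr rfl
    intro k _
    rw [Matrix.trace_mul_comm]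
  have lin2 : ((σd*Z).trace).re = ∑ k, w k * q' k := by
    rw [Matrix.trace_mul_comm, ← hZh]
    exact lin1
  have cyc1 : (Zᴴ*ρ*Z).trace = (Z*Z*ρ).trace := by
    rw [hZh, Matrix.trace_mul_cycle Z ρ Z]
  have cyc2 : (Zᴴ*Z*σd).trace = (Z*Z*σd).trace := by rw [hZh]
  -- computation of R
  have hYjj : ∀ j, Y j j = ∑ i, ((Complex.normSq (u j i) * c i j : ℝ) : ℂ) := by
    intro j
    rw [hY, Matrix.mul_apply]
    apply Finset.sum_congr rfl
    intro i _
    rw [hN]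
    simp only [Matrix.of_apply, Matrix.conjTranspose_apply]
    rw [← mul_assoc, Complex.star_def, Complex.mul_conj]
    push_cast
    ring
  have hY1 : (Yᴴ * σd).trace = ∑ j, (starRingEnd ℂ) (Y j j) * ((s j : ℝ) : ℂ) := by
    rw [hσd, Matrix.trace]
    apply Finset.sum_congr rfl
    intro j _
    simp [Matrix.mul_diagonal, Matrix.conjTranspose_apply, Complex.star_def]
  have hYR : ((Yᴴ*σd).trace).re
      = ∑ i, ∑ j, Complex.normSq (u j i) * ((s j)^2/(r i + t * s j)) := by
    rw [hY1, Complex.re_sum]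
    have hj : ∀ j, ((starRingEnd ℂ) (Y j j) * ((s j:ℝ):ℂ)).re
        = ∑ i, (Complex.normSq (u j i) * c i j) * s j := by
      intro j
      rw [hYjj j, map_sum, Finset.sum_mul, Complex.re_sum]
      apply Finset.sum_congr rfl
      intro i _
      rw [Complex.conj_ofReal, ← Complex.ofReal_mul]
      exact Complex.ofReal_re _
    rw [Finset.sum_congr rfl (fun j _ => hj j), Finset.sum_comm]
    apply Finset.sum_congr rfl
    intro i _
    apply Finset.sum_congr rfl
    intro j _
    simp only [hcdef]
    ring
  -- final assembly
  have final : 2*(∑ k, w k * q' k) - (∑ k, (w k)^2 * q k) - t*(∑ k, (w k)^2 * q' k)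
      ≤ ∑ i, ∑ j, Complex.normSq (u j i) * ((s j)^2/(r i + t * s j)) := by
    rw [← hYR]
    rw [cyc1, cyc2, lin1, lin2] at main
    have hb2 : t * ((Z*Z*σd).trace).re ≤ t * ∑ k, (w k)^2 * q' k :=
      mul_le_mul_of_nonneg_left bound2 ht.le
    linarith
  have hterm : ∀ k, (q' k)^2/(q k + t*q' k)
      = 2*(w k * q' k) - ((w k)^2 * q k + t*((w k)^2 * q' k)) := by
    intro k
    rcases eq_or_lt_of_le (hq' k) with h0 | hpos
    · simp only [hwdef, ← h0]
      simp
    · have hd : 0 < q k + t * q' k := by nlinarith [hq k]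
      rw [hwdef]
      field_simp
      ring
  calc ∑ k, (q' k)^2/(q k + t*q' k)
      = ∑ k, (2*(w k * q' k) - ((w k)^2 * q k + t*((w k)^2 * q' k))) :=
        Finset.sum_congr rfl (fun k _ => hterm k)
    _ = 2*(∑ k, w k * q' k) - (∑ k, (w k)^2 * q k) - t*(∑ k, (w k)^2 * q' k) := by
        rw [Finset.sum_sub_distrib, Finset.sum_add_distrib, ← Finset.mul_sum, ← Finset.mul_sum]
        ring
    _ ≤ _ := final

lemma psd_diag_re_nonneg {A : Matrix (Fin n) (Fin n) ℂ} (hA : A.PosSemidef) (j : Fin n) :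
    0 ≤ (A j j).re := by
  have h := hA.re_dotProduct_nonneg (Pi.single j 1)
  have e : star (Pi.single j 1) ⬝ᵥ A.mulVec (Pi.single j 1) = A j j := by
    simp [dotProduct, Matrix.mulVec, Pi.single_apply, Finset.sum_ite_eq,
      dotProduct_single]
  rw [e] at h
  exact h

/-- The core inequality: measured KL divergence vs relative entropy. -/
lemma core (ρ : Matrix (Fin n) (Fin n) ℂ) (hρ : ρ.PosSemidef) (hρtr : ρ.trace = 1)
    (s : Fin n → ℝ) (hdiag : ∀ j, ρ j j = (s j : ℂ)) (hs : ∀ j, 0 < s j)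
    (F : Fin K → Matrix (Fin n) (Fin n) ℂ) (hF : ∀ k, (F k).PosSemidef)
    (hFsum : ∑ k, F k = 1) :
    ∑ k, ((ρ * F k).trace).re *
        (Real.log (((ρ * F k).trace).re)
          - Real.log (((Matrix.diagonal (fun j => (s j : ℂ)) * F k).trace).re))
      ≤ (∑ i, hρ.1.eigenvalues i * Real.log (hρ.1.eigenvalues i))
        - ∑ j, s j * Real.log (s j) := by
  classical
  set σd : Matrix (Fin n) (Fin n) ℂ := Matrix.diagonal (fun j => (s j : ℂ)) with hσd
  have hσpsd : σd.PosSemidef := by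
    rw [hσd]
    exact Matrix.PosSemidef.diagonal (fun j => Complex.zero_le_real.mpr (hs j).le)
  set r : Fin n → ℝ := hρ.1.eigenvalues with hrdef
  set u : Matrix (Fin n) (Fin n) ℂ := (hρ.1.eigenvectorUnitary : Matrix (Fin n) (Fin n) ℂ)
    with hudef
  have hu1 : uᴴ * u = 1 := by
    rw [← Matrix.star_eq_conjTranspose]
    exact hρ.1.eigenvectorUnitary.2.1
  have hu2 : u * uᴴ = 1 := by
    rw [← Matrix.star_eq_conjTranspose]
    exact hρ.1.eigenvectorUnitary.2.2
  have hspec0 : ρ = u * Matrix.diagonal (fun i => (r i : ℂ)) * uᴴ := by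
    rw [hudef, hrdef, ← Matrix.star_eq_conjTranspose]
    exact hρ.1.spectral_theorem
  have hspec : ρ * u = u * Matrix.diagonal (fun i => (r i : ℂ)) := by
    conv_lhs => rw [hspec0]
    rw [mul_assoc, hu1, mul_one]
  have hr : ∀ i, 0 ≤ r i := hρ.eigenvalues_nonneg
  -- marginal sums
  have hcolsum : ∀ i, ∑ j, Complex.normSq (u j i) = 1 := by
    intro i
    have h := congrFun (congrFun hu1 i) i
    have e : (uᴴ * u) i i = ∑ j, ((Complex.normSq (u j i) : ℝ) : ℂ) := by
      rw [Matrix.mul_apply]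
      apply Finset.sum_congr rfl
      intro j _
      rw [Matrix.conjTranspose_apply, Complex.star_def, mul_comm, Complex.mul_conj]
    rw [Matrix.one_apply_eq] at h
    rw [e, ← Complex.ofReal_sum] at h
    exact_mod_cast h
  have hrowsum : ∀ j, ∑ i, Complex.normSq (u j i) = 1 := by
    intro j
    have h := congrFun (congrFun hu2 j) j
    have e : (u * uᴴ) j j = ∑ i, ((Complex.normSq (u j i) : ℝ) : ℂ) := by
      rw [Matrix.mul_apply]
      apply Finset.sum_congr rfl
      intro i _
      rw [Matrix.conjTranspose_apply, Complex.star_def, Complex.mul_conj]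
    rw [Matrix.one_apply_eq] at h
    rw [e, ← Complex.ofReal_sum] at h
    exact_mod_cast h
  have hTr : ∀ j, ∑ i, Complex.normSq (u j i) * r i = s j := by
    intro j
    have h := congrFun (congrFun hspec0 j) j
    have e : (u * Matrix.diagonal (fun i => (r i : ℂ)) * uᴴ) j j
        = ∑ i, ((Complex.normSq (u j i) * r i : ℝ) : ℂ) := by
      rw [Matrix.mul_apply]
      apply Finset.sum_congr rfl
      intro i _
      rw [Matrix.mul_diagonal, Matrix.conjTranspose_apply, Complex.star_def,
        mul_right_comm, Complex.mul_conj, ← Complex.ofReal_mul]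
    rw [hdiag j, e, ← Complex.ofReal_sum] at h
    exact_mod_cast h.symm
  have hssum : ∑ j, s j = 1 := by
    have h : ρ.trace = ∑ j, ((s j : ℝ) : ℂ) := by
      rw [Matrix.trace]
      apply Finset.sum_congr rfl
      intro j _
      rw [Matrix.diag_apply, hdiag j]
    rw [hρtr] at h
    rw [← Complex.ofReal_sum] at h
    exact_mod_cast h.symm
  have hrsum : ∑ i, r i = 1 := by
    have h1 : ∑ j, ∑ i, Complex.normSq (u j i) * r i = ∑ j, s j :=
      Finset.sum_congr rfl (fun j _ => hTr j)
    rw [Finset.sum_comm] at h1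
    have h2 : ∀ i, ∑ j, Complex.normSq (u j i) * r i = r i := by
      intro i
      rw [← Finset.sum_mul, hcolsum i, one_mul]
    rw [Finset.sum_congr rfl (fun i _ => h2 i)] at h1
    rw [h1, hssum]
  -- measurement probabilities
  set q : Fin K → ℝ := fun k => ((ρ * F k).trace).re with hqdef
  set q' : Fin K → ℝ := fun k => ((σd * F k).trace).re with hq'def
  have hq : ∀ k, 0 ≤ q k := fun k => psd_pair_trace_re_nonneg hρ (hF k)
  have hq' : ∀ k, 0 ≤ q' k := fun k => psd_pair_trace_re_nonneg hσpsd (hF k)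
  have hqsum : ∑ k, q k = 1 := by
    have h : ∑ k, (ρ * F k).trace = 1 := by
      have : ∑ k, (ρ * F k).trace = (ρ * ∑ k, F k).trace := by
        rw [Finset.mul_sum, Matrix.trace_sum]
      rw [this, hFsum, mul_one, hρtr]
    have h2 := congrArg Complex.re h
    rw [Complex.re_sum] at h2
    simpa using h2
  have hσtr : σd.trace = 1 := by
    rw [hσd, Matrix.trace_diagonal, ← Complex.ofReal_sum, hssum, Complex.ofReal_one]
  have hq'sum : ∑ k, q' k = 1 := by
    have h : ∑ k, (σd * F k).trace = 1 := by
      have : ∑ k, (σd * F k).trace = (σd * ∑ k, F k).trace := by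
        rw [Finset.mul_sum, Matrix.trace_sum]
      rw [this, hFsum, mul_one, hσtr]
    have h2 := congrArg Complex.re h
    rw [Complex.re_sum] at h2
    simpa using h2
  -- q' k = 0 → q k = 0
  have hqq' : ∀ k, q' k = 0 → q k = 0 := by
    intro k h0
    have hdiagF : ∀ j, (F k j j).re = 0 := by
      have hexp : q' k = ∑ j, s j * (F k j j).re := by
        show ((σd * F k).trace).re = _
        have : (σd * F k).trace = ∑ j, ((s j : ℝ) : ℂ) * F k j j := by
          rw [hσd, Matrix.trace]
          apply Finset.sum_congr rfl
          intro j _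
          rw [Matrix.diag_apply, Matrix.diagonal_mul]
        rw [this, Complex.re_sum]
        apply Finset.sum_congr rfl
        intro j _
        rw [Complex.re_ofReal_mul]
      rw [hexp] at h0
      have hnn : ∀ j ∈ Finset.univ, 0 ≤ s j * ((F k) j j).re :=
        fun j _ => mul_nonneg (hs j).le (psd_diag_re_nonneg (hF k) j)
      have := (Finset.sum_eq_zero_iff_of_nonneg hnn).mp h0
      intro j
      have hj := this j (Finset.mem_univ j)
      have := (hs j).ne'
      rcases mul_eq_zero.mp hj with h | h
      · exact absurd h this
      · exact h
    -- F k = 0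
    obtain ⟨B, hB⟩ := psd_eq_ct_mul_self (hF k)
    have hBzero : B = 0 := by
      ext a j
      have h1 : ((Bᴴ * B) j j).re = ∑ a, Complex.normSq (B a j) := by
        rw [Matrix.mul_apply, Complex.re_sum]
        apply Finset.sum_congr rfl
        intro a _
        rw [Matrix.conjTranspose_apply, Complex.star_def, mul_comm, Complex.mul_conj]
        exact Complex.ofReal_re _
      have h2 : (F k j j).re = ∑ a, Complex.normSq (B a j) := by rw [hB]; exact h1
      rw [hdiagF j] at h2
      have hnn : ∀ a ∈ Finset.univ, 0 ≤ Complex.normSq (B a j) :=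
        fun a _ => Complex.normSq_nonneg _
      have h3 := (Finset.sum_eq_zero_iff_of_nonneg hnn).mp h2.symm
      have := h3 a (Finset.mem_univ a)
      simpa [Complex.normSq_eq_zero] using this
    have hFzero : F k = 0 := by rw [hB, hBzero]; simp
    rw [hqdef]
    simp [hFzero]
  -- apply KLmono
  have key := KLmono (I := Fin n × Fin n) (K := Fin K)
    (fun p => Complex.normSq (u p.2 p.1)) (fun p => r p.1) (fun p => s p.2) q q'
    (fun p => Complex.normSq_nonneg _) (fun p => hr p.1) (fun p => hs p.2)
    hq hq' hqq'
    (by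
      rw [Fintype.sum_prod_type]
      have h : ∀ i, ∑ j, Complex.normSq (u j i) * r i = r i := by
        intro i
        rw [← Finset.sum_mul, hcolsum i, one_mul]
      rw [Finset.sum_congr rfl (fun i _ => h i), hrsum])
    (by
      rw [Fintype.sum_prod_type, Finset.sum_comm]
      have h : ∀ j, ∑ i, Complex.normSq (u j i) * s j = s j := by
        intro j
        rw [← Finset.sum_mul, hrowsum j, one_mul]
      rw [Finset.sum_congr rfl (fun j _ => h j), hssum])
    hqsum hq'sum
    (by
      intro t ht
      have h := master ρ hρ s hs u r hr hu2 hspec F hF hFsum t ht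
      rw [Fintype.sum_prod_type]
      exact h)
  -- rewrite the RHS of key
  have hRHS : ∑ p : Fin n × Fin n, Complex.normSq (u p.2 p.1)
        * (r p.1 * Real.log (r p.1) - r p.1 * Real.log (s p.2))
      = (∑ i, r i * Real.log (r i)) - ∑ j, s j * Real.log (s j) := by
    rw [Fintype.sum_prod_type]
    simp only [mul_sub, Finset.sum_sub_distrib]
    congr 1
    · apply Finset.sum_congr rfl
      intro i _
      rw [← Finset.sum_mul, hcolsum i, one_mul]
    · rw [Finset.sum_comm]
      apply Finset.sum_congr rfl
      intro j _
      have h : ∀ i, Complex.normSq (u j i) * (r i * Real.log (s j))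
          = (Complex.normSq (u j i) * r i) * Real.log (s j) := fun i => by ring
      rw [Finset.sum_congr rfl (fun i _ => h i), ← Finset.sum_mul, hTr j]
  rw [hRHS] at key
  exact key

lemma conj_pow (W X : Matrix (Fin n) (Fin n) ℂ) (hW1 : Wᴴ * W = 1) (hW2 : W * Wᴴ = 1)
    (k : ℕ) : (W * X * Wᴴ)^k = W * X^k * Wᴴ := by
  induction k with
  | zero => simp [pow_zero, hW2]
  | succ k ih =>
    rw [pow_succ, pow_succ, ih]
    calc W * X ^ k * Wᴴ * (W * X * Wᴴ) = W * X ^ k * (Wᴴ * W) * X * Wᴴ := by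
          simp only [mul_assoc]
      _ = W * (X ^ k * X) * Wᴴ := by rw [hW1]; simp only [mul_assoc, mul_one]
      _ = _ := by simp only [mul_assoc]

lemma conj_aeval (W X : Matrix (Fin n) (Fin n) ℂ) (hW1 : Wᴴ * W = 1) (hW2 : W * Wᴴ = 1)
    (p : Polynomial ℝ) :
    Polynomial.aeval (W * X * Wᴴ) p = W * (Polynomial.aeval X p) * Wᴴ := by
  induction p using Polynomial.induction_on' with
  | add p q hp hq => rw [map_add, map_add, hp, hq, Matrix.mul_add, Matrix.add_mul]
  | monomial k a =>
    rw [Polynomial.aeval_monomial, Polynomial.aeval_monomial, conj_pow W X hW1 hW2 k]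
    rw [Algebra.algebraMap_eq_smul_one]
    simp only [smul_mul_assoc, mul_smul_comm, one_mul]

lemma aeval_diagonal_complex (d : Fin n → ℝ) (p : Polynomial ℝ) :
    Polynomial.aeval (Matrix.diagonal (fun j => ((d j : ℝ) : ℂ))) p
      = Matrix.diagonal (fun j => ((p.eval (d j) : ℝ) : ℂ)) := by
  induction p using Polynomial.induction_on' with
  | add p q hp hq =>
    have hfun : (fun i => (((Polynomial.eval (d i) p : ℝ) : ℂ) + ((Polynomial.eval (d i) q : ℝ) : ℂ)))
        = fun j => ((Polynomial.eval (d j) (p + q) : ℝ) : ℂ) := by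
      funext j
      rw [Polynomial.eval_add]
      push_cast
      ring
    rw [map_add, hp, hq, Matrix.diagonal_add]
    simp only [hfun]
  | monomial k a =>
    have hfun : (a • ((fun j => ((d j : ℝ) : ℂ)) ^ k))
        = fun j => ((Polynomial.eval (d j) (Polynomial.monomial k a) : ℝ) : ℂ) := by
      funext j
      rw [Pi.smul_apply, Pi.pow_apply, Polynomial.eval_monomial]
      push_cast
      simp [Complex.real_smul]
    rw [Polynomial.aeval_monomial, Matrix.diagonal_pow,
      Algebra.algebraMap_eq_smul_one, smul_mul_assoc, one_mul, ← Matrix.diagonal_smul, hfun]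

/-- hermLog of a positive diagonal matrix with positive entries is the diagonal of logs. -/
lemma hermLog_diagonal (s : Fin n → ℝ)
    (hσ : (Matrix.diagonal (fun j => ((s j : ℝ) : ℂ))).IsHermitian) :
    hermLog hσ = Matrix.diagonal (fun j => ((Real.log (s j) : ℝ) : ℂ)) := by
  classical
  set W : Matrix (Fin n) (Fin n) ℂ := (hσ.eigenvectorUnitary : Matrix (Fin n) (Fin n) ℂ)
    with hWdef
  set μ : Fin n → ℝ := hσ.eigenvalues with hμdef
  have hW1 : Wᴴ * W = 1 := by
    rw [← Matrix.star_eq_conjTranspose]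
    exact hσ.eigenvectorUnitary.2.1
  have hW2 : W * Wᴴ = 1 := by
    rw [← Matrix.star_eq_conjTranspose]
    exact hσ.eigenvectorUnitary.2.2
  have hspec : Matrix.diagonal (fun j => ((s j : ℝ) : ℂ))
      = W * Matrix.diagonal (fun i => ((μ i : ℝ) : ℂ)) * Wᴴ := by
    rw [hWdef, hμdef, ← Matrix.star_eq_conjTranspose]
    exact hσ.spectral_theorem
  -- each eigenvalue is one of the s j
  have hmem : ∀ i, ∃ j, μ i = s j := by
    intro i
    have hdet : (Matrix.diagonal (fun j => ((s j : ℝ) : ℂ)) - ((μ i : ℝ) : ℂ) • 1).det = 0 := by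
      have h1 : Matrix.diagonal (fun j => ((s j : ℝ) : ℂ)) - ((μ i : ℝ) : ℂ) • 1
          = W * (Matrix.diagonal (fun i' => ((μ i' : ℝ) : ℂ)) - ((μ i : ℝ) : ℂ) • 1) * Wᴴ := by
        rw [Matrix.mul_sub, Matrix.sub_mul, ← hspec]
        congr 1
        rw [mul_smul_comm, smul_mul_assoc, mul_one, hW2]
      rw [h1, Matrix.det_mul, Matrix.det_mul]
      have h2 : (Matrix.diagonal (fun i' => ((μ i' : ℝ) : ℂ)) - ((μ i : ℝ) : ℂ) • 1).det = 0 := by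
        have h3 : Matrix.diagonal (fun i' => ((μ i' : ℝ) : ℂ)) - ((μ i : ℝ) : ℂ) • 1
            = Matrix.diagonal (fun i' => ((μ i' : ℝ) : ℂ) - ((μ i : ℝ) : ℂ)) := by
          rw [Matrix.smul_one_eq_diagonal, Matrix.diagonal_sub]
        rw [h3, Matrix.det_diagonal]
        apply Finset.prod_eq_zero (Finset.mem_univ i)
        simp
      rw [h2]
      ring
    have h4 : (Matrix.diagonal (fun j => ((s j : ℝ) : ℂ)) - ((μ i : ℝ) : ℂ) • 1)
        = Matrix.diagonal (fun j => ((s j : ℝ) : ℂ) - ((μ i : ℝ) : ℂ)) := by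
      rw [Matrix.smul_one_eq_diagonal, Matrix.diagonal_sub]
    rw [h4, Matrix.det_diagonal] at hdet
    obtain ⟨j, _, hj⟩ := Finset.prod_eq_zero_iff.mp hdet
    refine ⟨j, ?_⟩
    have := sub_eq_zero.mp hj
    exact_mod_cast this.symm
  -- Lagrange interpolation of log on the nodes
  set nodes : Finset ℝ := Finset.image s Finset.univ with hnodes
  set p : Polynomial ℝ := Lagrange.interpolate nodes id Real.log with hp
  have heval : ∀ x ∈ nodes, p.eval x = Real.log x := by
    intro x hx
    have := Lagrange.eval_interpolate_at_node (s := nodes) (v := id) Real.log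
      (Set.injOn_id _) hx
    exact this
  have hsmem : ∀ j, s j ∈ nodes := fun j => Finset.mem_image_of_mem s (Finset.mem_univ j)
  have hμmem : ∀ i, μ i ∈ nodes := by
    intro i
    obtain ⟨j, hj⟩ := hmem i
    rw [hj]
    exact hsmem j
  -- two evaluations of aeval p
  have hA : Polynomial.aeval (Matrix.diagonal (fun j => ((s j : ℝ) : ℂ))) p
      = Matrix.diagonal (fun j => ((Real.log (s j) : ℝ) : ℂ)) := by
    rw [aeval_diagonal_complex]
    have hfun : (fun j => ((p.eval (s j) : ℝ) : ℂ)) = fun j => ((Real.log (s j) : ℝ) : ℂ) := by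
      funext j
      rw [heval _ (hsmem j)]
    simp only [hfun]
  have hB : Polynomial.aeval (Matrix.diagonal (fun j => ((s j : ℝ) : ℂ))) p = hermLog hσ := by
    have h6 : (fun i => ((p.eval (μ i) : ℝ) : ℂ)) = fun i => ((Real.log (μ i) : ℝ) : ℂ) := by
      funext i
      rw [heval _ (hμmem i)]
    conv_lhs => rw [hspec]
    rw [conj_aeval W _ hW1 hW2, aeval_diagonal_complex]
    simp only [h6]
    show W * _ * Wᴴ = _ * _ * star _
    rw [Matrix.star_eq_conjTranspose]
  rw [← hB, hA]

lemma hermLog_congr {A B : Matrix (Fin n) (Fin n) ℂ} (h : A = B) (hA : A.IsHermitian) :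
    hermLog hA = hermLog (h ▸ hA : B.IsHermitian) := by subst h; rfl

/-- trace of ρ times hermLog of itself -/
lemma trace_hermLog (ρ : Matrix (Fin n) (Fin n) ℂ) (hρ : ρ.PosSemidef) :
    ((ρ * hermLog hρ.1).trace).re
      = ∑ i, hρ.1.eigenvalues i * Real.log (hρ.1.eigenvalues i) := by
  classical
  set r : Fin n → ℝ := hρ.1.eigenvalues with hrdef
  set u : Matrix (Fin n) (Fin n) ℂ := (hρ.1.eigenvectorUnitary : Matrix (Fin n) (Fin n) ℂ)
    with hudef
  have hu1 : uᴴ * u = 1 := by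
    rw [← Matrix.star_eq_conjTranspose]
    exact hρ.1.eigenvectorUnitary.2.1
  have hspec0 : ρ = u * Matrix.diagonal (fun i => ((r i : ℝ) : ℂ)) * uᴴ := by
    rw [hudef, hrdef, ← Matrix.star_eq_conjTranspose]
    exact hρ.1.spectral_theorem
  have hspec : ρ * u = u * Matrix.diagonal (fun i => ((r i : ℝ) : ℂ)) := by
    conv_lhs => rw [hspec0]
    rw [mul_assoc, hu1, mul_one]
  have h1 : ρ * hermLog hρ.1
      = u * (Matrix.diagonal (fun i => ((r i : ℝ) : ℂ))
          * Matrix.diagonal (fun i => ((Real.log (r i) : ℝ) : ℂ)) * uᴴ) := by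
    show ρ * (u * Matrix.diagonal (fun i => ((Real.log (r i) : ℝ) : ℂ)) * star u) = _
    rw [Matrix.star_eq_conjTranspose, ← mul_assoc, ← mul_assoc, hspec]
    simp only [mul_assoc]
  rw [h1, Matrix.trace_mul_comm, mul_assoc, hu1, mul_one,
    Matrix.diagonal_mul_diagonal, Matrix.trace_diagonal, Complex.re_sum]
  apply Finset.sum_congr rfl
  intro i _
  rw [← Complex.ofReal_mul]
  exact Complex.ofReal_re _

lemma trace_mul_stdBasis (M : Matrix (Fin n) (Fin n) ℂ) (l : Fin n) :
    (M * Matrix.single l l 1).trace = M l l := by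
  classical
  rw [Matrix.trace]
  have h : ∀ a, (M * Matrix.single l l 1).diag a
      = if l = a then M a l else 0 := by
    intro a
    rw [Matrix.diag_apply, Matrix.mul_apply]
    simp only [Matrix.single, Matrix.of_apply, mul_ite, mul_one, mul_zero]
    by_cases hla : l = a
    · subst hla
      simp
    · simp [hla]
  rw [Finset.sum_congr rfl (fun a _ => h a)]
  simp
lemma sum_stdBasis : ∑ j, Matrix.single j j (1:ℂ) = (1 : Matrix (Fin n) (Fin n) ℂ) := by
  classical
  ext a b
  rw [Matrix.sum_apply]
  by_cases hab : a = b
  · subst hab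
    simp [Matrix.single, Matrix.one_apply]
  · simp only [Matrix.single, Matrix.of_apply, Matrix.one_apply, hab, if_false]
    rw [Finset.sum_eq_zero]
    intro j _
    rw [if_neg]
    rintro ⟨h1, h2⟩
    exact hab (h1.symm.trans h2)

lemma stdBasis_psd (j : Fin n) : (Matrix.single j j (1:ℂ)).PosSemidef := by
  classical
  have h : Matrix.single j j (1:ℂ)
      = (Matrix.single j j (1:ℂ))ᴴ * Matrix.single j j (1:ℂ) := by
    rw [show (Matrix.single j j (1:ℂ))ᴴ = Matrix.single j j 1 by
      ext a b; simp [Matrix.conjTranspose_apply, Matrix.single, and_comm]]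
    rw [Matrix.single_mul_single_same]
    norm_num
  rw [h]
  exact Matrix.posSemidef_conjTranspose_mul_self _
lemma q'_eq_zero_imp (ρ : Matrix (Fin n) (Fin n) ℂ) (s : Fin n → ℝ) (hs : ∀ j, 0 < s j)
    (G : Matrix (Fin n) (Fin n) ℂ) (hG : G.PosSemidef)
    (h0 : ((Matrix.diagonal (fun j => ((s j : ℝ) : ℂ)) * G).trace).re = 0) :
    ((ρ * G).trace).re = 0 := by
  classical
  have hdiagF : ∀ j, (G j j).re = 0 := by
    have hexp : ((Matrix.diagonal (fun j => ((s j : ℝ) : ℂ)) * G).trace).re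
        = ∑ j, s j * (G j j).re := by
      have h1 : (Matrix.diagonal (fun j => ((s j : ℝ) : ℂ)) * G).trace
          = ∑ j, ((s j : ℝ) : ℂ) * G j j := by
        rw [Matrix.trace]
        apply Finset.sum_congr rfl
        intro j _
        rw [Matrix.diag_apply, Matrix.diagonal_mul]
      rw [h1, Complex.re_sum]
      apply Finset.sum_congr rfl
      intro j _
      rw [Complex.re_ofReal_mul]
    rw [hexp] at h0
    have hnn : ∀ j ∈ Finset.univ, 0 ≤ s j * (G j j).re :=
      fun j _ => mul_nonneg (hs j).le (psd_diag_re_nonneg hG j)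
    have hz := (Finset.sum_eq_zero_iff_of_nonneg hnn).mp h0
    intro j
    have hj := hz j (Finset.mem_univ j)
    rcases mul_eq_zero.mp hj with h | h
    · exact absurd h (hs j).ne'
    · exact h
  obtain ⟨B, hB⟩ := psd_eq_ct_mul_self hG
  have hBzero : B = 0 := by
    ext a j
    have h1 : ((Bᴴ * B) j j).re = ∑ a, Complex.normSq (B a j) := by
      rw [Matrix.mul_apply, Complex.re_sum]
      apply Finset.sum_congr rfl
      intro a _
      rw [Matrix.conjTranspose_apply, Complex.star_def, mul_comm, Complex.mul_conj]
      exact Complex.ofReal_re _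
    have h2 : (G j j).re = ∑ a, Complex.normSq (B a j) := by rw [hB]; exact h1
    rw [hdiagF j] at h2
    have hnn : ∀ a ∈ Finset.univ, 0 ≤ Complex.normSq (B a j) :=
      fun a _ => Complex.normSq_nonneg _
    have h3 := (Finset.sum_eq_zero_iff_of_nonneg hnn).mp h2.symm
    have := h3 a (Finset.mem_univ a)
    simpa [Complex.normSq_eq_zero] using this
  have hGzero : G = 0 := by rw [hB, hBzero]; simp
  rw [hGzero]
  simp

lemma trace_kraus {mK : ℕ} (ρ : Matrix (Fin n) (Fin n) ℂ)
    (A : Fin mK → Matrix (Fin n) (Fin n) ℂ) (Pk : Matrix (Fin n) (Fin n) ℂ) :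
    ((∑ α, A α * ρ * (A α)ᴴ) * Pk).trace = (ρ * ∑ α, (A α)ᴴ * (Pk * A α)).trace := by
  rw [Finset.sum_mul, Matrix.trace_sum, Finset.mul_sum, Matrix.trace_sum]
  apply Finset.sum_congr rfl
  intro α _
  calc (A α * ρ * (A α)ᴴ * Pk).trace
      = ((A α) * (ρ * ((A α)ᴴ * Pk))).trace := by simp only [mul_assoc]
    _ = ((ρ * ((A α)ᴴ * Pk)) * A α).trace := Matrix.trace_mul_comm _ _
    _ = (ρ * ((A α)ᴴ * (Pk * A α))).trace := by simp only [mul_assoc]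

lemma Dnonneg (ρ : Matrix (Fin n) (Fin n) ℂ) (hρ : ρ.PosSemidef) (hρtr : ρ.trace = 1)
    (s : Fin n → ℝ) (hdiag : ∀ j, ρ j j = ((s j : ℝ) : ℂ)) (hs : ∀ j, 0 < s j) :
    0 ≤ (∑ i, hρ.1.eigenvalues i * Real.log (hρ.1.eigenvalues i))
        - ∑ j, s j * Real.log (s j) := by
  classical
  have hcore := core (K := n) ρ hρ hρtr s hdiag hs
    (fun j => Matrix.single j j 1) (fun j => stdBasis_psd j) sum_stdBasis
  have hzero : ∑ k, ((ρ * Matrix.single k k 1).trace).re *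
      (Real.log (((ρ * Matrix.single k k 1).trace).re)
        - Real.log (((Matrix.diagonal (fun j => ((s j : ℝ) : ℂ))
            * Matrix.single k k 1).trace).re)) = 0 := by
    apply Finset.sum_eq_zero
    intro k _
    rw [trace_mul_stdBasis, trace_mul_stdBasis, hdiag k, Matrix.diagonal_apply_eq]
    rw [sub_self, mul_zero]
  rw [hzero] at hcore
  exact hcore

end Stmt9Aux

open Stmt9Aux

/-- The KL divergence between the EPM distributions of `ρ` and its dephasing
`Δ[ρ]` is bounded by twice the quantum relative entropy `D(ρ‖Δ[ρ])`. -/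
theorem stmt9 {n mK K : ℕ} (ρ : Matrix (Fin n) (Fin n) ℂ)
    (hρ : ρ.PosSemidef) (hρtr : ρ.trace = 1)
    (hΔ : (Matrix.diagonal fun i => ρ i i).PosDef)
    (A : Fin mK → Matrix (Fin n) (Fin n) ℂ)
    (hKraus : ∑ α, (A α)ᴴ * A α = 1)
    (P : Fin K → Matrix (Fin n) (Fin n) ℂ)
    (hPherm : ∀ k, (P k).IsHermitian)
    (hPorth : ∀ k k', P k * P k' = if k = k' then P k else 0)
    (hPsum : ∑ k, P k = 1) :
    KLdiv (pcoh A P ρ) (pcoh A P (Matrix.diagonal fun i => ρ i i))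
      ≤ 2 * ((ρ * (hermLog hρ.1 - hermLog hΔ.posSemidef.1)).trace).re := by
  classical
  set s : Fin n → ℝ := fun j => (ρ j j).re with hsdef
  have hdiag : ∀ j, ρ j j = ((s j : ℝ) : ℂ) := by
    intro j
    have h := congrFun (congrFun hρ.1.eq j) j
    rw [Matrix.conjTranspose_apply, Complex.star_def] at h
    exact (Complex.conj_eq_iff_re.mp h).symm
  have hs : ∀ j, 0 < s j := by
    intro j
    have h := (Matrix.posDef_diagonal_iff.mp hΔ) j
    rw [hdiag j] at h
    exact Complex.zero_lt_real.mp h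
  have hσeq : (Matrix.diagonal fun i => ρ i i) = Matrix.diagonal (fun j => ((s j : ℝ) : ℂ)) := by
    have : (fun i => ρ i i) = fun j => ((s j : ℝ) : ℂ) := funext hdiag
    rw [this]
  set F : Fin K → Matrix (Fin n) (Fin n) ℂ := fun k => ∑ α, (A α)ᴴ * (P k * A α) with hFdef
  have hPpsd : ∀ k, (P k).PosSemidef := by
    intro k
    have h1 : P k * P k = P k := by
      have := hPorth k k
      simpa using this
    have h2 : (P k)ᴴ * P k = P k := by rw [(hPherm k).eq, h1]
    rw [← h2]
    exact Matrix.posSemidef_conjTranspose_mul_self _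
  have hFpsd : ∀ k, (F k).PosSemidef := by
    intro k
    rw [hFdef]
    refine Finset.sum_induction _ _ (fun x y hx hy => hx.add hy) Matrix.PosSemidef.zero ?_
    intro α _
    have := (hPpsd k).conjTranspose_mul_mul_same (A α)
    rw [mul_assoc] at this
    exact this
  have hFsum : ∑ k, F k = 1 := by
    rw [hFdef, Finset.sum_comm, ← hKraus]
    apply Finset.sum_congr rfl
    intro α _
    rw [← Finset.mul_sum, ← Finset.sum_mul, hPsum, one_mul]
  set q : Fin K → ℝ := fun k => ((ρ * F k).trace).re with hqdef
  set q' : Fin K → ℝ := fun k =>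
    ((Matrix.diagonal (fun j => ((s j : ℝ) : ℂ)) * F k).trace).re with hq'def
  have hσpsd : (Matrix.diagonal (fun j => ((s j : ℝ) : ℂ))).PosSemidef :=
    Matrix.PosSemidef.diagonal (fun j => Complex.zero_le_real.mpr (hs j).le)
  have hq : ∀ k, 0 ≤ q k := fun k => psd_pair_trace_re_nonneg hρ (hFpsd k)
  have hq' : ∀ k, 0 ≤ q' k := fun k => psd_pair_trace_re_nonneg hσpsd (hFpsd k)
  have hqq' : ∀ k, q' k = 0 → q k = 0 := fun k h =>
    q'_eq_zero_imp ρ s hs (F k) (hFpsd k) h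
  have hssum : ∑ j, s j = 1 := by
    have h : ρ.trace = ∑ j, ((s j : ℝ) : ℂ) := by
      rw [Matrix.trace]
      apply Finset.sum_congr rfl
      intro j _
      rw [Matrix.diag_apply, hdiag j]
    rw [hρtr, ← Complex.ofReal_sum] at h
    exact_mod_cast h.symm
  -- pcoh rewriting
  have hpcoh1 : ∀ x : Fin n × Fin K, pcoh A P ρ x = s x.1 * q x.2 := by
    intro x
    show ((ρ * Matrix.single x.1 x.1 1).trace).re *
      (((∑ α, A α * ρ * (A α)ᴴ) * P x.2).trace).re = _
    rw [trace_mul_stdBasis, hdiag x.1, trace_kraus ρ A (P x.2)]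
    simp [hqdef, hFdef]
  have hpcoh2 : ∀ x : Fin n × Fin K,
      pcoh A P (Matrix.diagonal fun i => ρ i i) x = s x.1 * q' x.2 := by
    intro x
    show (((Matrix.diagonal fun i => ρ i i) * Matrix.single x.1 x.1 1).trace).re *
      (((∑ α, A α * (Matrix.diagonal fun i => ρ i i) * (A α)ᴴ) * P x.2).trace).re = _
    rw [hσeq, trace_mul_stdBasis,
      trace_kraus (Matrix.diagonal (fun j => ((s j : ℝ) : ℂ))) A (P x.2)]
    simp [hq'def, hFdef, Matrix.diagonal_apply_eq]
  -- KL factorization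
  have hKL : KLdiv (pcoh A P ρ) (pcoh A P (Matrix.diagonal fun i => ρ i i))
      = ∑ k, q k * (Real.log (q k) - Real.log (q' k)) := by
    show (∑ x : Fin n × Fin K, pcoh A P ρ x *
        Real.log (pcoh A P ρ x / pcoh A P (Matrix.diagonal fun i => ρ i i) x)) = _
    rw [Finset.sum_congr rfl (fun x _ => by rw [hpcoh1 x, hpcoh2 x])]
    rw [Fintype.sum_prod_type]
    have hterm : ∀ l k, s l * q k * Real.log ((s l * q k)/(s l * q' k))
        = s l * (q k * (Real.log (q k) - Real.log (q' k))) := by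
      intro l k
      rw [mul_div_mul_left _ _ (ne_of_gt (hs l))]
      rcases eq_or_lt_of_le (hq k) with h0 | hpos
      · rw [← h0]
        ring
      · have hq'pos : 0 < q' k := by
          rcases eq_or_lt_of_le (hq' k) with h0' | h
          · exact absurd (hqq' k h0'.symm) (ne_of_gt hpos)
          · exact h
        rw [Real.log_div (ne_of_gt hpos) (ne_of_gt hq'pos)]
        ring
    rw [Finset.sum_congr rfl (fun l _ => Finset.sum_congr rfl (fun k _ => hterm l k))]
    rw [Finset.sum_congr rfl (fun l _ => (Finset.mul_sum _ _ _).symm)]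
    rw [← Finset.sum_mul, hssum, one_mul]
  -- core inequality and nonnegativity
  have hcore := core ρ hρ hρtr s hdiag hs F hFpsd hFsum
  have hD := Dnonneg ρ hρ hρtr s hdiag hs
  -- RHS identification
  have hlogσ : hermLog hΔ.posSemidef.1 = Matrix.diagonal (fun j => ((Real.log (s j) : ℝ) : ℂ)) := by
    rw [hermLog_congr hσeq hΔ.posSemidef.1]
    exact hermLog_diagonal s _
  have hRHS : ((ρ * (hermLog hρ.1 - hermLog hΔ.posSemidef.1)).trace).re
      = (∑ i, hρ.1.eigenvalues i * Real.log (hρ.1.eigenvalues i))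
        - ∑ j, s j * Real.log (s j) := by
    rw [Matrix.mul_sub, Matrix.trace_sub, Complex.sub_re, trace_hermLog ρ hρ, hlogσ]
    congr 1
    have h1 : (ρ * Matrix.diagonal (fun j => ((Real.log (s j) : ℝ) : ℂ))).trace
        = ∑ j, ((s j : ℝ) : ℂ) * ((Real.log (s j) : ℝ) : ℂ) := by
      rw [Matrix.trace]
      apply Finset.sum_congr rfl
      intro j _
      rw [Matrix.diag_apply, Matrix.mul_diagonal, hdiag j]
    rw [h1, Complex.re_sum]
    apply Finset.sum_congr rfl
    intro j _
    rw [← Complex.ofReal_mul]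
    exact Complex.ofReal_re _
  rw [hKL, hRHS]
  linarith [hcore, hD]
end

section
/- For a qubit evolving under a phase-covariant channel Φ (with respect to the σ_z eigenbasis) and with energy measurements in the σ_z eigenbasis, the EPM joint distribution p_coh(l,k)(ρ) = Tr(ρΠ_l)·Tr(Φ(ρ)Π'_k) coincides with p_coh(l,k)(Δ[ρ]) for every qubit state ρ; consequently the coherence fluctuation distance 𝔇_c(ρ) vanishes. -/
open Matrix
open scoped ComplexOrder

/-- The phase rotation `e^{-iφσ_z} = diag(e^{-iφ}, e^{iφ})`. -/
noncomputable def phaseU (φ : ℝ) : Matrix (Fin 2) (Fin 2) ℂ :=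
  Matrix.diagonal ![Complex.exp (-(Complex.I * φ)), Complex.exp (Complex.I * φ)]

/-- EPM joint distribution for a qubit with energy measurements in the `σ_z`
eigenbasis: `p_coh(σ)(l,k) = Tr(σ Π_l) · Tr(Φ(σ) Π'_k)`. -/
noncomputable def pcohQubit (Φ : Matrix (Fin 2) (Fin 2) ℂ →ₗ[ℂ] Matrix (Fin 2) (Fin 2) ℂ)
    (σ : Matrix (Fin 2) (Fin 2) ℂ) : Fin 2 × Fin 2 → ℝ :=
  fun x => ((σ * Matrix.single x.1 x.1 1).trace).re *
    ((Φ σ * Matrix.single x.2 x.2 1).trace).re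

private lemma trace_mul_std (M : Matrix (Fin 2) (Fin 2) ℂ) (l : Fin 2) :
    (M * Matrix.single l l 1).trace = M l l := by
  fin_cases l <;>
  simp [Matrix.trace, Matrix.mul_apply, Matrix.single, Matrix.diag, Finset.sum_ite_eq]

private lemma diag_nn {M : Matrix (Fin 2) (Fin 2) ℂ} (h : M.PosSemidef) (l : Fin 2) :
    0 ≤ M l l := by
  exact h.diag_nonneg

private lemma diag_real {M : Matrix (Fin 2) (Fin 2) ℂ} (h : M.IsHermitian) (l : Fin 2) :
    M l l = ((M l l).re : ℂ) := by
  have h1 : (starRingEnd ℂ) (M l l) = M l l := by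
    have := congrFun (congrFun h l) l
    simpa [Matrix.conjTranspose_apply] using this
  exact ((Complex.conj_eq_iff_re).mp h1).symm

private lemma diag_pos {M : Matrix (Fin 2) (Fin 2) ℂ} (h : M.PosDef) (l : Fin 2) :
    0 < M l l := by
  exact h.diag_pos

private lemma mulkey : ∀ (u m v : ℂ), u * m * v = (u * v) * m := by intros; ring

private lemma conj_phase (φ : ℝ) (M : Matrix (Fin 2) (Fin 2) ℂ) (i j : Fin 2) :
    (phaseU φ * M * phaseU (-φ)) i j
      = (![Complex.exp (-(Complex.I * φ)), Complex.exp (Complex.I * φ)] i) * M i j *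
        (![Complex.exp (-(Complex.I * (-φ:ℝ))), Complex.exp (Complex.I * (-φ:ℝ))] j) := by
  simp [phaseU, Matrix.diagonal_mul, Matrix.mul_diagonal, mul_comm, mul_assoc, mul_left_comm]

private lemma conj_phase_diag (φ : ℝ) (M : Matrix (Fin 2) (Fin 2) ℂ) (k : Fin 2) :
    (phaseU φ * M * phaseU (-φ)) k k = M k k := by
  rw [conj_phase]
  fin_cases k <;> simp <;> rw [mulkey, ← Complex.exp_add] <;> ring_nf <;> simp

private lemma conj_phase_off (M : Matrix (Fin 2) (Fin 2) ℂ) (hd : ∀ k, M k k = 0) :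
    phaseU (Real.pi/2) * M * phaseU (-(Real.pi/2)) = -M := by
  ext i j
  rw [conj_phase]
  fin_cases i <;> fin_cases j <;> simp [hd] <;> rw [mulkey, ← Complex.exp_add] <;>
    ring_nf <;>
    rw [mul_comm Complex.I] <;> simp [Complex.exp_neg, Complex.exp_pi_mul_I] <;> norm_num

private lemma one_sub_psd (ρ : Matrix (Fin 2) (Fin 2) ℂ) (hρ : ρ.PosSemidef)
    (htr : ρ.trace = 1) : (1 - ρ).PosSemidef := by
  have h1 := (hρ.mul_mul_conjTranspose_same !![0,1;-1,0]).transpose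
  have htr2 : ρ 0 0 + ρ 1 1 = 1 := by simpa [Matrix.trace, Fin.sum_univ_two] using htr
  have heq : (!![0,1;-1,0] * ρ * (!![0,1;-1,0]:Matrix (Fin 2) (Fin 2) ℂ)ᴴ)ᵀ = 1 - ρ := by
    ext i j
    fin_cases i <;> fin_cases j <;>
      simp [Matrix.mul_apply, Fin.sum_univ_two, Matrix.conjTranspose_apply, Matrix.one_apply,
        Matrix.vecMul, dotProduct] <;>
      linear_combination htr2
  rwa [heq] at h1

private lemma gibbs_term (p q : ℝ) (hp : 0 ≤ p) (hq : 0 ≤ q) (hs : q = 0 → p = 0) :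
    p - q ≤ p * Real.log (p / q) := by
  rcases eq_or_lt_of_le hp with h | h
  · simp [← h]; linarith
  · have hq' : 0 < q := lt_of_le_of_ne hq fun e => by
      have := hs e.symm; linarith
    have hlog := Real.log_le_sub_one_of_pos (div_pos hq' h)
    have hrev : Real.log (p / q) = - Real.log (q / p) := by
      rw [← Real.log_inv]
      congr 1
      field_simp
    have := mul_le_mul_of_nonneg_left hlog h.le
    rw [mul_sub, mul_div_cancel₀ _ (ne_of_gt h)] at this
    rw [hrev]
    nlinarith

/-- For a phase-covariant qubit channel the EPM distribution of `ρ` equals that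
of its dephasing `Δ[ρ]`, and hence the coherence fluctuation distance vanishes. -/
theorem stmt12 (Φ : Matrix (Fin 2) (Fin 2) ℂ →ₗ[ℂ] Matrix (Fin 2) (Fin 2) ℂ)
    (hcov : ∀ (φ : ℝ) (X : Matrix (Fin 2) (Fin 2) ℂ),
      phaseU φ * Φ X * phaseU (-φ) = Φ (phaseU φ * X * phaseU (-φ)))
    (hTP : ∀ X : Matrix (Fin 2) (Fin 2) ℂ, (Φ X).trace = X.trace)
    (hPos : ∀ X : Matrix (Fin 2) (Fin 2) ℂ, X.PosSemidef → (Φ X).PosSemidef)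
    (ρ : Matrix (Fin 2) (Fin 2) ℂ) (hρ : ρ.PosSemidef) (hρtr : ρ.trace = 1) :
    (∀ x : Fin 2 × Fin 2,
      pcohQubit Φ ρ x = pcohQubit Φ (Matrix.diagonal fun j => ρ j j) x) ∧
    sInf {x : ℝ | ∃ σ : Matrix (Fin 2) (Fin 2) ℂ, σ.PosDef ∧ σ.trace = 1 ∧
        (∀ i j, i ≠ j → σ i j = 0) ∧
        x = KLdiv (pcohQubit Φ ρ) (pcohQubit Φ σ)} = 0 := by
  -- notation
  set Δ : Matrix (Fin 2) (Fin 2) ℂ := Matrix.diagonal (fun j => ρ j j) with hΔ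
  -- the dephasing lemma: diagonal entries of `Φ ρ` and `Φ Δ` agree
  have hdeph : ∀ k, (Φ Δ) k k = (Φ ρ) k k := by
    intro k
    set C : Matrix (Fin 2) (Fin 2) ℂ := ρ - Δ with hC
    have hCdiag : ∀ k, C k k = 0 := by
      intro k; simp [hC, hΔ, Matrix.sub_apply, Matrix.diagonal_apply_eq]
    have h := hcov (Real.pi/2) C
    rw [conj_phase_off C hCdiag, map_neg] at h
    have h2 := congrFun (congrFun h k) k
    rw [conj_phase_diag] at h2
    have hCk : (Φ C) k k = 0 := by
      have h3 : (Φ C) k k = -((Φ C) k k) := by simpa [Matrix.neg_apply] using h2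
      have h4 : (Φ C) k k + (Φ C) k k = 0 := by linear_combination h3
      exact add_self_eq_zero.mp h4
    have hρΔ : ρ = Δ + C := by simp [hC]
    rw [hρΔ, map_add, Matrix.add_apply, hCk, add_zero]
  have pcoh_eq : ∀ (σ : Matrix (Fin 2) (Fin 2) ℂ) (x : Fin 2 × Fin 2),
      pcohQubit Φ σ x = (σ x.1 x.1).re * ((Φ σ) x.2 x.2).re := by
    intro σ x
    unfold pcohQubit
    rw [trace_mul_std, trace_mul_std]
  have part1 : ∀ x, pcohQubit Φ ρ x = pcohQubit Φ Δ x := by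
    intro x
    rw [pcoh_eq, pcoh_eq, hΔ, Matrix.diagonal_apply_eq, hdeph]
  refine ⟨fun x => by rw [part1 x, hΔ], ?_⟩
  -- basic facts about the distribution of ρ
  have hΦρ := hPos ρ hρ
  have ha0 : ∀ l, 0 ≤ (ρ l l).re := by
    intro l
    have := (Complex.le_def.mp (diag_nn hρ l)).1
    simpa using this
  have hb0 : ∀ k, 0 ≤ ((Φ ρ) k k).re := by
    intro k
    have := (Complex.le_def.mp (diag_nn hΦρ k)).1
    simpa using this
  have hsuma : (ρ 0 0).re + (ρ 1 1).re = 1 := by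
    have := congrArg Complex.re hρtr
    simpa [Matrix.trace, Fin.sum_univ_two] using this
  have hsumb : ((Φ ρ) 0 0).re + ((Φ ρ) 1 1).re = 1 := by
    have h := (hTP ρ).trans hρtr
    have := congrArg Complex.re h
    simpa [Matrix.trace, Fin.sum_univ_two] using this
  -- support lemma: if a diagonal entry of Φσ vanishes (σ positive definite
  -- diagonal), the corresponding entry of Φρ vanishes too.
  have hsupp : ∀ (σ : Matrix (Fin 2) (Fin 2) ℂ), σ.PosDef → (∀ i j, i ≠ j → σ i j = 0) →
      ∀ k, ((Φ σ) k k).re = 0 → ((Φ ρ) k k).re = 0 := by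
    intro σ hσ hσd k h0
    set m : ℝ := min (σ 0 0).re (σ 1 1).re with hm
    have hmp : 0 < m := by
      have h00 := (Complex.lt_def.mp (diag_pos hσ 0)).1
      have h11 := (Complex.lt_def.mp (diag_pos hσ 1)).1
      simp only [Complex.zero_re] at h00 h11
      exact lt_min h00 h11
    have hA : (σ - (m:ℂ) • 1).PosSemidef := by
      have hAd : σ - (m:ℂ) • 1 = Matrix.diagonal (fun l => σ l l - m) := by
        ext i j
        by_cases hij : i = j
        · subst hij
          simp [Matrix.sub_apply, Matrix.smul_apply, Matrix.one_apply_eq,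
            Matrix.diagonal_apply_eq]
        · simp [Matrix.sub_apply, Matrix.smul_apply, Matrix.one_apply_ne hij,
            Matrix.diagonal_apply_ne _ hij, hσd i j hij]
      rw [hAd]
      refine Matrix.posSemidef_diagonal_iff.mpr fun l => ?_
      rw [Complex.le_def]
      have hreal := diag_real hσ.posSemidef.isHermitian l
      constructor
      · have : m ≤ (σ l l).re := by fin_cases l <;> simp [hm, min_le_left, min_le_right]
        simpa using this
      · have : (σ l l).im = 0 := by
          rw [hreal]; simp
        simp [this]
    have hΦA := hPos _ hA
    have h1 := diag_nn hΦA k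
    rw [map_sub, _root_.map_smul] at h1
    have h1re := (Complex.le_def.mp h1).1
    simp [Matrix.sub_apply, Matrix.smul_apply, Complex.sub_re, Complex.mul_re] at h1re
    have hΦ1 := hPos 1 Matrix.PosSemidef.one
    have hw0 : 0 ≤ ((Φ 1) k k).re := by
      have := (Complex.le_def.mp (diag_nn hΦ1 k)).1
      simpa using this
    have hw : ((Φ 1) k k).re = 0 := by nlinarith
    have hB := hPos _ (one_sub_psd ρ hρ hρtr)
    have h2 := diag_nn hB k
    rw [map_sub] at h2
    have h2re := (Complex.le_def.mp h2).1
    simp [Matrix.sub_apply, Complex.sub_re] at h2re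
    have := hb0 k
    linarith
  -- the EPM distribution of ρ sums to 1
  have hsump : ∑ y : Fin 2 × Fin 2, pcohQubit Φ ρ y = 1 := by
    simp only [pcoh_eq]
    rw [Fintype.sum_prod_type]
    simp only [Fin.sum_univ_two]
    nlinarith [hsuma, hsumb]
  -- lower bound: every element of the set is nonnegative (Gibbs' inequality)
  have hlb : ∀ (σ : Matrix (Fin 2) (Fin 2) ℂ), σ.PosDef → σ.trace = 1 →
      (∀ i j, i ≠ j → σ i j = 0) → 0 ≤ KLdiv (pcohQubit Φ ρ) (pcohQubit Φ σ) := by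
    intro σ hσ hσtr hσd
    have hc : ∀ l, 0 < (σ l l).re := by
      intro l
      have := (Complex.lt_def.mp (diag_pos hσ l)).1
      simpa using this
    have hd0 : ∀ k, 0 ≤ ((Φ σ) k k).re := by
      intro k
      have := (Complex.le_def.mp (diag_nn (hPos σ hσ.posSemidef) k)).1
      simpa using this
    have hsumc : (σ 0 0).re + (σ 1 1).re = 1 := by
      have := congrArg Complex.re hσtr
      simpa [Matrix.trace, Fin.sum_univ_two] using this
    have hsumd : ((Φ σ) 0 0).re + ((Φ σ) 1 1).re = 1 := by
      have := congrArg Complex.re ((hTP σ).trans hσtr)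
      simpa [Matrix.trace, Fin.sum_univ_two] using this
    have hsumq : ∑ y : Fin 2 × Fin 2, pcohQubit Φ σ y = 1 := by
      simp only [pcoh_eq]
      rw [Fintype.sum_prod_type]
      simp only [Fin.sum_univ_two]
      nlinarith [hsumc, hsumd]
    have hterm : ∀ y : Fin 2 × Fin 2, pcohQubit Φ ρ y - pcohQubit Φ σ y ≤
        pcohQubit Φ ρ y * Real.log (pcohQubit Φ ρ y / pcohQubit Φ σ y) := by
      intro y
      refine gibbs_term _ _ ?_ ?_ ?_
      · rw [pcoh_eq]; exact mul_nonneg (ha0 _) (hb0 _)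
      · rw [pcoh_eq]; exact mul_nonneg (hc _).le (hd0 _)
      · rw [pcoh_eq, pcoh_eq]
        intro h
        rcases mul_eq_zero.mp h with h | h
        · exact absurd h (ne_of_gt (hc _))
        · rw [hsupp σ hσ hσd _ h, mul_zero]
    have h := Finset.sum_le_sum (fun y (_ : y ∈ Finset.univ) => hterm y)
    rw [Finset.sum_sub_distrib, hsump, hsumq] at h
    simpa [KLdiv] using h
  -- the approximating family
  have hub : ∀ t : ℝ, 0 < t → t < 1 → ∃ σ : Matrix (Fin 2) (Fin 2) ℂ,
      σ.PosDef ∧ σ.trace = 1 ∧ (∀ i j, i ≠ j → σ i j = 0) ∧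
      KLdiv (pcohQubit Φ ρ) (pcohQubit Φ σ) ≤ -2 * Real.log (1 - t) := by
    intro t ht0 ht1
    set σt : Matrix (Fin 2) (Fin 2) ℂ :=
      Matrix.diagonal (fun l => (((1-t) * (ρ l l).re + t/2 : ℝ) : ℂ)) with hσt
    have hentry : ∀ l, 0 < (1-t) * (ρ l l).re + t/2 := by
      intro l
      nlinarith [ha0 l]
    have hpd : σt.PosDef := by
      rw [hσt, Matrix.posDef_diagonal_iff]
      intro l
      rw [Complex.lt_def]
      constructor
      · simpa using hentry l
      · simp
    have htr : σt.trace = 1 := by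
      have hr : ((1-t) * (ρ 0 0).re + t/2) + ((1-t) * (ρ 1 1).re + t/2) = 1 := by
        nlinarith [hsuma]
      rw [hσt]
      simp only [Matrix.trace, Matrix.diag, Fin.sum_univ_two, Matrix.diagonal_apply_eq]
      exact_mod_cast hr
    have hoff : ∀ i j : Fin 2, i ≠ j → σt i j = 0 := by
      intro i j hij
      rw [hσt]
      exact Matrix.diagonal_apply_ne _ hij
    -- decomposition of σt
    have hdec : σt = ((1-t:ℝ):ℂ) • Δ + ((t/2:ℝ):ℂ) • (1 : Matrix (Fin 2) (Fin 2) ℂ) := by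
      ext i j
      by_cases hij : i = j
      · subst hij
        rw [hσt]
        simp only [Matrix.diagonal_apply_eq, Matrix.add_apply, Matrix.smul_apply, hΔ,
          Matrix.one_apply_eq, smul_eq_mul, mul_one]
        push_cast
        try rw [← diag_real hρ.isHermitian i]
        try ring
      · rw [hσt]
        simp [Matrix.diagonal_apply_ne _ hij, Matrix.add_apply, Matrix.smul_apply, hΔ,
          Matrix.one_apply_ne hij]
    have hw0 : ∀ k, 0 ≤ ((Φ 1) k k).re := by
      intro k
      have := (Complex.le_def.mp (diag_nn (hPos 1 Matrix.PosSemidef.one) k)).1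
      simpa using this
    have hd_eq : ∀ k, ((Φ σt) k k).re = (1-t) * ((Φ ρ) k k).re + (t/2) * ((Φ 1) k k).re := by
      intro k
      rw [hdec, map_add, _root_.map_smul, _root_.map_smul]
      simp only [Matrix.add_apply, Matrix.smul_apply, smul_eq_mul]
      rw [hdeph k]
      simp [Complex.add_re, Complex.mul_re]
    have hd_ge : ∀ k, (1-t) * ((Φ ρ) k k).re ≤ ((Φ σt) k k).re := by
      intro k
      rw [hd_eq k]
      nlinarith [hw0 k, hb0 k]
    have hc_eq : ∀ l, (σt l l).re = (1-t) * (ρ l l).re + t/2 := by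
      intro l
      rw [hσt]
      simp [Matrix.diagonal_apply_eq]
    -- termwise bound
    have hterm : ∀ y : Fin 2 × Fin 2, pcohQubit Φ ρ y * Real.log (pcohQubit Φ ρ y / pcohQubit Φ σt y)
        ≤ pcohQubit Φ ρ y * (-2 * Real.log (1-t)) := by
      intro y
      rcases eq_or_lt_of_le (mul_nonneg (ha0 y.1) (hb0 y.2)) with h | h
      · have hp : pcohQubit Φ ρ y = 0 := by rw [pcoh_eq]; exact h.symm
        rw [hp]
        simp
      · have ha : 0 < (ρ y.1 y.1).re := by
          rcases eq_or_lt_of_le (ha0 y.1) with h' | h'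
          · exfalso; rw [← h'] at h; simpa using h
          · exact h'
        have hb : 0 < ((Φ ρ) y.2 y.2).re := by
          rcases eq_or_lt_of_le (hb0 y.2) with h' | h'
          · exfalso; rw [← h'] at h; nlinarith
          · exact h'
        have hq : (1-t)^2 * ((ρ y.1 y.1).re * ((Φ ρ) y.2 y.2).re) ≤ pcohQubit Φ σt y := by
          rw [pcoh_eq, hc_eq]
          have h1 := hd_ge y.2
          have h2 : (1-t) * (ρ y.1 y.1).re ≤ (1-t) * (ρ y.1 y.1).re + t/2 := by linarith
          have h3 : (0:ℝ) < 1 - t := by linarith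
          have h4 := mul_le_mul h2 h1
            (by nlinarith : (0:ℝ) ≤ (1-t) * ((Φ ρ) y.2 y.2).re)
            (by nlinarith : (0:ℝ) ≤ (1-t) * (ρ y.1 y.1).re + t/2)
          nlinarith [h4]
        have h3 : (0:ℝ) < 1 - t := by linarith
        have hppos : 0 < pcohQubit Φ ρ y := by rw [pcoh_eq]; exact h
        have hqpos : 0 < pcohQubit Φ σt y := by
          refine lt_of_lt_of_le ?_ hq
          positivity
        have hple : pcohQubit Φ ρ y / pcohQubit Φ σt y ≤ ((1-t)^2)⁻¹ := by
          rw [div_le_iff₀ hqpos, pcoh_eq]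
          have h5 : (0:ℝ) < (1-t)^2 := by positivity
          rw [inv_mul_eq_div, le_div_iff₀ h5]
          calc (ρ y.1 y.1).re * ((Φ ρ) y.2 y.2).re * (1-t)^2
              = (1-t)^2 * ((ρ y.1 y.1).re * ((Φ ρ) y.2 y.2).re) := by ring
            _ ≤ pcohQubit Φ σt y := hq
        have hlog : Real.log (pcohQubit Φ ρ y / pcohQubit Φ σt y) ≤ -2 * Real.log (1-t) := by
          calc Real.log (pcohQubit Φ ρ y / pcohQubit Φ σt y)
              ≤ Real.log (((1-t)^2)⁻¹) := Real.log_le_log (div_pos hppos hqpos) hple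
            _ = -2 * Real.log (1-t) := by
                rw [Real.log_inv, Real.log_pow]
                push_cast
                ring
        exact mul_le_mul_of_nonneg_left hlog hppos.le
    refine ⟨σt, hpd, htr, hoff, ?_⟩
    calc KLdiv (pcohQubit Φ ρ) (pcohQubit Φ σt)
        ≤ ∑ y : Fin 2 × Fin 2, pcohQubit Φ ρ y * (-2 * Real.log (1-t)) :=
          Finset.sum_le_sum (fun y _ => hterm y)
      _ = -2 * Real.log (1-t) := by rw [← Finset.sum_mul, hsump, one_mul]
  -- assemble
  have hbdd : BddBelow {x : ℝ | ∃ σ : Matrix (Fin 2) (Fin 2) ℂ, σ.PosDef ∧ σ.trace = 1 ∧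
      (∀ i j, i ≠ j → σ i j = 0) ∧ x = KLdiv (pcohQubit Φ ρ) (pcohQubit Φ σ)} := by
    refine ⟨0, ?_⟩
    rintro v ⟨σ, h1, h2, h3, rfl⟩
    exact hlb σ h1 h2 h3
  have hne : Set.Nonempty {x : ℝ | ∃ σ : Matrix (Fin 2) (Fin 2) ℂ, σ.PosDef ∧ σ.trace = 1 ∧
      (∀ i j, i ≠ j → σ i j = 0) ∧ x = KLdiv (pcohQubit Φ ρ) (pcohQubit Φ σ)} := by
    obtain ⟨σ, h1, h2, h3, _⟩ := hub (1/2) (by norm_num) (by norm_num)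
    exact ⟨_, σ, h1, h2, h3, rfl⟩
  refine le_antisymm ?_ ?_
  · refine le_of_forall_pos_le_add fun ε hε => ?_
    set r : ℝ := max (1/2) (Real.exp (-(ε/2))) with hr
    have hr0 : (0:ℝ) < r := lt_of_lt_of_le (by norm_num) (le_max_left _ _)
    have hr1 : r < 1 := by
      refine max_lt (by norm_num) ?_
      exact Real.exp_lt_one_iff.mpr (by linarith)
    obtain ⟨σ, h1, h2, h3, h4⟩ := hub (1 - r) (by linarith) (by linarith)
    have hmem : KLdiv (pcohQubit Φ ρ) (pcohQubit Φ σ) ∈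
        {x : ℝ | ∃ σ : Matrix (Fin 2) (Fin 2) ℂ, σ.PosDef ∧ σ.trace = 1 ∧
        (∀ i j, i ≠ j → σ i j = 0) ∧ x = KLdiv (pcohQubit Φ ρ) (pcohQubit Φ σ)} :=
      ⟨σ, h1, h2, h3, rfl⟩
    have hlogr : -(ε/2) ≤ Real.log r := by
      calc -(ε/2) = Real.log (Real.exp (-(ε/2))) := (Real.log_exp _).symm
        _ ≤ Real.log r := Real.log_le_log (Real.exp_pos _) (le_max_right _ _)
    have hbound : KLdiv (pcohQubit Φ ρ) (pcohQubit Φ σ) ≤ ε := by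
      have : (1 : ℝ) - (1 - r) = r := by ring
      rw [this] at h4
      linarith
    calc sInf _ ≤ KLdiv (pcohQubit Φ ρ) (pcohQubit Φ σ) := csInf_le hbdd hmem
      _ ≤ ε := hbound
      _ ≤ 0 + ε := by linarith
  · refine le_csInf hne ?_
    rintro v ⟨σ, h1, h2, h3, rfl⟩
    exact hlb σ h1 h2 h3
end
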